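/- arXiv:2507.15427 — 2 statements merged into one kernel-verified Lean document; each statement's English description precedes it below -/
import Mathlib

section
/- Let κ > ω be regular. Suppose T is a countable complete first-order theory and η ∈ κ^κ is such that M_η ⊨ T, and for every α < κ⁺ there exists ξ ∈ κ^κ with M_ξ ⊨ T, M_ξ ≇ M_η, and M_ξ ≡^α_{κ⁺κ} M_η. Then the orbit Orb(M_η) = {ξ ∈ κ^κ : M_ξ ≅ M_η} is not κ-Borel. -/
open Cardinal Set

universe u v w

namespace GDST

variable {K : Type u} {A : Type v}

/-- The set `N_η` determined by the partial function with domain `Y` and values given by `η`. -/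
def nbhd (Y : Set K) (η : K → A) : Set (K → A) := {ζ | ∀ i ∈ Y, ζ i = η i}

/-- Basic κ-open subsets of `K → K`: sets `N_η` where `η` is a partial function with
domain of size `< #K`, together with the empty set. -/
def IsBasicOpen (S : Set (K → A)) : Prop :=
  (∃ (Y : Set K) (η : K → A), #Y < #K ∧ S = nbhd Y η) ∨ S = ∅

/-- Open in the topology generated by the basic κ-open sets. -/
def IsOpenStd (U : Set (K → A)) : Prop :=
  ∀ ζ ∈ U, ∃ S : Set (K → A), IsBasicOpen S ∧ ζ ∈ S ∧ S ⊆ U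

/-- A union of at most `μ` basic κ-open sets; `(κ,μ)`-open. -/
def IsMuOpen (μ : Cardinal.{u}) (U : Set (K → A)) : Prop :=
  ∃ (ι : Type u) (f : ι → Set (K → A)), #ι ≤ μ ∧ (∀ i, IsBasicOpen (f i)) ∧ U = ⋃ i, f i

/-- `(κ,μ)`-closed: the complement is `(κ,μ)`-open. -/
def IsMuClosed (μ : Cardinal.{u}) (C : Set (K → A)) : Prop := IsMuOpen μ Cᶜ

/-- The `(κ,μ)`-Borel sets: the smallest class containing the basic κ-open sets and closed
under complements and unions and intersections of length at most `μ`. -/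
inductive MuBorel (μ : Cardinal.{u}) : Set (K → A) → Prop
  | basic (S : Set (K → A)) : IsBasicOpen S → MuBorel μ S
  | compl (S : Set (K → A)) : MuBorel μ S → MuBorel μ Sᶜ
  | iUnion (ι : Type u) (f : ι → Set (K → A)) : #ι ≤ μ → (∀ i, MuBorel μ (f i)) →
      MuBorel μ (⋃ i, f i)
  | iInter (ι : Type u) (f : ι → Set (K → A)) : #ι ≤ μ → (∀ i, MuBorel μ (f i)) →
      MuBorel μ (⋂ i, f i)

/-- κ-open: a union of at most `κ = #K` basic κ-open sets. -/
def IsKOpen (U : Set (K → A)) : Prop := IsMuOpen #K U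

/-- κ-closed. -/
def IsKClosed (C : Set (K → A)) : Prop := IsMuClosed #K C

/-- κ-Borel. -/
def KBorel (S : Set (K → A)) : Prop := MuBorel #K S

/- Product space versions, for subsets of `(K → A) × (K → B)`. -/
section Prod

variable {B : Type w}

/-- Basic κ-open subsets of the product: products of basic κ-open sets. -/
def IsBasicOpen2 (S : Set ((K → A) × (K → B))) : Prop :=
  ∃ (S₁ : Set (K → A)) (S₂ : Set (K → B)), IsBasicOpen S₁ ∧ IsBasicOpen S₂ ∧ S = S₁ ×ˢ S₂

def IsOpenStd2 (U : Set ((K → A) × (K → B))) : Prop :=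
  ∀ p ∈ U, ∃ S, IsBasicOpen2 S ∧ p ∈ S ∧ S ⊆ U

def IsMuOpen2 (μ : Cardinal.{u}) (U : Set ((K → A) × (K → B))) : Prop :=
  ∃ (ι : Type u) (f : ι → Set ((K → A) × (K → B))),
    #ι ≤ μ ∧ (∀ i, IsBasicOpen2 (f i)) ∧ U = ⋃ i, f i

def IsMuClosed2 (μ : Cardinal.{u}) (C : Set ((K → A) × (K → B))) : Prop := IsMuOpen2 μ Cᶜ

inductive MuBorel2 (μ : Cardinal.{u}) : Set ((K → A) × (K → B)) → Prop
  | basic (S : Set ((K → A) × (K → B))) : IsBasicOpen2 S → MuBorel2 μ S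
  | compl (S : Set ((K → A) × (K → B))) : MuBorel2 μ S → MuBorel2 μ Sᶜ
  | iUnion (ι : Type u) (f : ι → Set ((K → A) × (K → B))) : #ι ≤ μ → (∀ i, MuBorel2 μ (f i)) →
      MuBorel2 μ (⋃ i, f i)
  | iInter (ι : Type u) (f : ι → Set ((K → A) × (K → B))) : #ι ≤ μ → (∀ i, MuBorel2 μ (f i)) →
      MuBorel2 μ (⋂ i, f i)

def IsKOpen2 (U : Set ((K → A) × (K → B))) : Prop := IsMuOpen2 #K U

def IsKClosed2 (C : Set ((K → A) × (K → B))) : Prop := IsMuClosed2 #K C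

def KBorel2 (S : Set ((K → A) × (K → B))) : Prop := MuBorel2 #K S

/-- κ-Σ¹₁ : projections of κ-Borel subsets of the product. -/
def KSigma11 (S : Set (K → A)) : Prop :=
  ∃ C : Set ((K → A) × (K → A)), KBorel2 C ∧ S = Prod.fst '' C

end Prod

end GDST

namespace GDST

open FirstOrder

/-- The countable relational language with, for each arity n, relation symbols Q_m, m ∈ ℕ. -/
def Lrel : Language := ⟨fun _ => Empty, fun _ => ℕ⟩

variable {K : Type u}

/-- The interpretation of the relation Q_m (of arity n) in the structure coded by η:
Q_m(v) holds iff η(π(m,v)) > 0 (z being the least element of K). -/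
def RelP [LinearOrder K] (z : K) (π : (Σ n : ℕ, ℕ × (Fin n → K)) ≃ K) (η : K → K)
    (n m : ℕ) (v : Fin n → K) : Prop :=
  z < η (π ⟨n, (m, v)⟩)

/-- The Lrel-structure M_η on K coded by η. -/
def Mstr [LinearOrder K] (z : K) (π : (Σ n : ℕ, ℕ × (Fin n → K)) ≃ K) (η : K → K) :
    Lrel.Structure K where
  funMap := fun f _ => f.elim
  RelMap := fun {n} m v => RelP z π η n m v

/-- M_η is a model of the theory T. -/
def ModelsT [LinearOrder K] (z : K) (π : (Σ n : ℕ, ℕ × (Fin n → K)) ≃ K)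
    (T : Lrel.Theory) (η : K → K) : Prop :=
  ∀ φ ∈ T, @FirstOrder.Language.Sentence.Realize Lrel K (Mstr z π η) φ

/-- M_η and M_ξ are isomorphic. -/
def IsoM [LinearOrder K] (z : K) (π : (Σ n : ℕ, ℕ × (Fin n → K)) ≃ K) (η ξ : K → K) : Prop :=
  ∃ σ : K ≃ K, ∀ (n m : ℕ) (v : Fin n → K),
    RelP z π η n m v ↔ RelP z π ξ n m (fun i => σ (v i))

/-- A partial isomorphism between M_η and M_ξ of size < κ, given as a set of pairs. -/
def PIso [LinearOrder K] (z : K) (π : (Σ n : ℕ, ℕ × (Fin n → K)) ≃ K) (η ξ : K → K)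
    (s : Set (K × K)) : Prop :=
  #s < #K ∧
  (∀ p ∈ s, ∀ q ∈ s, (p.1 = q.1 ↔ p.2 = q.2)) ∧
  ∀ (n m : ℕ) (v w : Fin n → K), (∀ i, (v i, w i) ∈ s) →
    (RelP z π η n m v ↔ RelP z π ξ n m w)

/-- M_η ≡^α_{κ⁺κ} M_ξ: equivalence up to quantifier rank α of L_{κ⁺κ}, rendered via the
standard characterization through an α-indexed descending chain of back-and-forth families
of partial isomorphisms of size < κ with the (< κ)-extension property. -/
def EquivRk [LinearOrder K] (z : K) (π : (Σ n : ℕ, ℕ × (Fin n → K)) ≃ K)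
    (a : Ordinal.{u}) (η ξ : K → K) : Prop :=
  ∃ I : Ordinal.{u} → Set (Set (K × K)),
    (∀ b : Ordinal.{u}, ∀ s ∈ I b, PIso z π η ξ s) ∧
    (∅ : Set (K × K)) ∈ I a ∧
    ∀ b c : Ordinal.{u}, c < b → b ≤ a → ∀ s ∈ I b,
      (∀ A : Set K, #A < #K → ∃ s' ∈ I c, s ⊆ s' ∧ A ⊆ Prod.fst '' s') ∧
      (∀ B : Set K, #B < #K → ∃ s' ∈ I c, s ⊆ s' ∧ B ⊆ Prod.snd '' s')

end GDST

namespace GDST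

open FirstOrder

set_option linter.unusedSectionVars false

variable {K : Type u} [LinearOrder K]

/-! ### Auxiliary set/cardinal lemmas -/

lemma aux_mk_fst_le (e : Set (K × K)) : #{d : K | ∃ y, (d, y) ∈ e} ≤ #e := by
  refine Cardinal.mk_le_of_injective (f := fun d => (⟨(d.1, d.2.choose), d.2.choose_spec⟩ : e)) ?_
  intro a b h
  apply Subtype.ext
  exact congrArg (fun q : e => (q : K × K).1) h

lemma aux_mk_snd_le (e : Set (K × K)) : #{y : K | ∃ d, (d, y) ∈ e} ≤ #e := by
  refine Cardinal.mk_le_of_injective (f := fun y => (⟨(y.2.choose, y.1), y.2.choose_spec⟩ : e)) ?_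
  intro a b h
  apply Subtype.ext
  exact congrArg (fun q : e => (q : K × K).2) h

lemma aux_exists_notMem {s : Set K} (h : #s < #K) : ∃ d, d ∉ s := by
  by_contra hc
  push_neg at hc
  have : s = Set.univ := Set.eq_univ_of_forall hc
  rw [this, Cardinal.mk_univ] at h
  exact lt_irrefl _ h

/-! ### Isomorphism is an equivalence -/

lemma isoM_refl (z : K) (π : (Σ n : ℕ, ℕ × (Fin n → K)) ≃ K) (ξ : K → K) : IsoM z π ξ ξ :=
  ⟨Equiv.refl K, fun _ _ _ => Iff.rfl⟩

lemma isoM_symm {z : K} {π : (Σ n : ℕ, ℕ × (Fin n → K)) ≃ K} {ξ η : K → K}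
    (h : IsoM z π ξ η) : IsoM z π η ξ := by
  obtain ⟨σ, hσ⟩ := h
  refine ⟨σ.symm, fun n m v => ?_⟩
  have := hσ n m (fun i => σ.symm (v i))
  simpa using this.symm

lemma isoM_trans {z : K} {π : (Σ n : ℕ, ℕ × (Fin n → K)) ≃ K} {ξ η θ : K → K}
    (h1 : IsoM z π ξ η) (h2 : IsoM z π η θ) : IsoM z π ξ θ := by
  obtain ⟨σ, hσ⟩ := h1
  obtain ⟨τ, hτ⟩ := h2
  exact ⟨σ.trans τ, fun n m v => (hσ n m v).trans (hτ n m _)⟩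

/-! ### Conditions -/

/-- A condition: a pair `(e, u)` where `e` is (the graph of) a partial embedding of the
model coded by `ξ` into the generic model, and `u` is a partial value assignment for the
generic code. -/
abbrev GCond (K : Type u) := Set (K × K) × Set (K × K)

/-- functional relation -/
def Fnl (s : Set (K × K)) : Prop := ∀ ⦃a b b'⦄, (a, b) ∈ s → (a, b') ∈ s → b = b'

/-- injective relation -/
def Inj (s : Set (K × K)) : Prop := ∀ ⦃a a' b⦄, (a, b) ∈ s → (a', b) ∈ s → a = a'

/-- The points of the coordinate `x`. -/
def pts (π : (Σ n : ℕ, ℕ × (Fin n → K)) ≃ K) (x : K) : Fin (π.symm x).1 → K :=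
  (π.symm x).2.2

/-- Coherence of a condition with respect to `ξ`. -/
def Coh (z : K) (π : (Σ n : ℕ, ℕ × (Fin n → K)) ≃ K) (ξ : K → K)
    (e u : Set (K × K)) : Prop :=
  ∀ ⦃x y⦄, (x, y) ∈ u →
    (∀ i, ∃ d, (d, pts π x i) ∈ e) ∧
    ∀ vd : Fin (π.symm x).1 → K, (∀ i, (vd i, pts π x i) ∈ e) →
      (z < y ↔ RelP z π ξ (π.symm x).1 (π.symm x).2.1 vd)

def CondOK (z : K) (π : (Σ n : ℕ, ℕ × (Fin n → K)) ≃ K) (ξ : K → K) (p : GCond K) : Prop :=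
  Fnl p.1 ∧ Inj p.1 ∧ #p.1 < #K ∧ Fnl p.2 ∧ #p.2 < #K ∧ Coh z π ξ p.1 p.2

/-- Extension of conditions. -/
def CLe (p q : GCond K) : Prop := p.1 ⊆ q.1 ∧ p.2 ⊆ q.2

lemma CLe.refl (p : GCond K) : CLe p p := ⟨subset_rfl, subset_rfl⟩

lemma CLe.trans {p q r : GCond K} (h1 : CLe p q) (h2 : CLe q r) : CLe p r :=
  ⟨h1.1.trans h2.1, h1.2.trans h2.2⟩

lemma coh_apply {z : K} {π : (Σ n : ℕ, ℕ × (Fin n → K)) ≃ K} {ξ : K → K}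
    {e u : Set (K × K)} (hc : Coh z π ξ e u) {n m : ℕ} {v : Fin n → K} {y : K}
    (hm : (π ⟨n, (m, v)⟩, y) ∈ u) :
    (∀ i, ∃ d, (d, v i) ∈ e) ∧
    ∀ vd : Fin n → K, (∀ i, (vd i, v i) ∈ e) → (z < y ↔ RelP z π ξ n m vd) := by
  have h := hc hm
  have hs : π.symm (π ⟨n, (m, v)⟩) = ⟨n, (m, v)⟩ := π.symm_apply_apply _
  unfold pts at h
  rw [hs] at h
  exact h

/-! ### Total (generic) objects -/

def egraph (σ : K ≃ K) : Set (K × K) := {ab | σ ab.1 = ab.2}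

def ugraph (ζ : K → K) : Set (K × K) := {xy | ζ xy.1 = xy.2}

/-- Total coherence: `(σ, ζ)` is a full generic pair over `ξ`. -/
def TotalCoh (z : K) (π : (Σ n : ℕ, ℕ × (Fin n → K)) ≃ K) (ξ : K → K)
    (σ : K ≃ K) (ζ : K → K) : Prop :=
  Coh z π ξ (egraph σ) (ugraph ζ)

def Below (p : GCond K) (σ : K ≃ K) (ζ : K → K) : Prop :=
  p.1 ⊆ egraph σ ∧ p.2 ⊆ ugraph ζ

lemma totalCoh_isoM {z : K} {π : (Σ n : ℕ, ℕ × (Fin n → K)) ≃ K} {ξ : K → K}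
    {σ : K ≃ K} {ζ : K → K} (h : TotalCoh z π ξ σ ζ) : IsoM z π ζ ξ := by
  refine ⟨σ.symm, fun n m v => ?_⟩
  have hm : (π ⟨n, (m, v)⟩, ζ (π ⟨n, (m, v)⟩)) ∈ ugraph ζ := rfl
  have h2 := (coh_apply h hm).2 (fun i => σ.symm (v i)) (fun i => by simp [egraph])
  exact h2

lemma subCondOK {z : K} {π : (Σ n : ℕ, ℕ × (Fin n → K)) ≃ K} {ξ : K → K}
    {σ : K ≃ K} {ζ : K → K} (ht : TotalCoh z π ξ σ ζ) {p : GCond K}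
    (hb : Below p σ ζ) (h1 : #p.1 < #K) (h2 : #p.2 < #K)
    (hex : ∀ ⦃x y⦄, (x, y) ∈ p.2 → ∀ i, ∃ d, (d, pts π x i) ∈ p.1) :
    CondOK z π ξ p := by
  refine ⟨?_, ?_, h1, ?_, h2, ?_⟩
  · intro a b b' hab hab'
    have e1 := hb.1 hab; have e2 := hb.1 hab'
    simp only [egraph, Set.mem_setOf_eq] at e1 e2
    rw [← e1, ← e2]
  · intro a a' b hab hab'
    have e1 := hb.1 hab; have e2 := hb.1 hab'
    simp only [egraph, Set.mem_setOf_eq] at e1 e2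
    exact σ.injective (e1.trans e2.symm)
  · intro a b b' hab hab'
    have e1 := hb.2 hab; have e2 := hb.2 hab'
    simp only [ugraph, Set.mem_setOf_eq] at e1 e2
    rw [← e1, ← e2]
  · intro x y hxy
    refine ⟨hex hxy, fun vd hvd => ?_⟩
    exact (ht (hb.2 hxy)).2 vd (fun i => hb.1 (hvd i))

def joinC (p q : GCond K) : GCond K := (p.1 ∪ q.1, p.2 ∪ q.2)

lemma joinOK {z : K} {π : (Σ n : ℕ, ℕ × (Fin n → K)) ≃ K} {ξ : K → K}
    {σ : K ≃ K} {ζ : K → K} (hk : ℵ₀ ≤ #K) (ht : TotalCoh z π ξ σ ζ) {p q : GCond K}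
    (hp : CondOK z π ξ p) (hq : CondOK z π ξ q)
    (hbp : Below p σ ζ) (hbq : Below q σ ζ) :
    CondOK z π ξ (joinC p q) ∧ Below (joinC p q) σ ζ ∧ CLe p (joinC p q) ∧ CLe q (joinC p q) := by
  have hb : Below (joinC p q) σ ζ :=
    ⟨Set.union_subset hbp.1 hbq.1, Set.union_subset hbp.2 hbq.2⟩
  refine ⟨subCondOK ht hb ?_ ?_ ?_, hb, ⟨Set.subset_union_left, Set.subset_union_left⟩,
    ⟨Set.subset_union_right, Set.subset_union_right⟩⟩
  · exact lt_of_le_of_lt (Cardinal.mk_union_le _ _)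
      (Cardinal.add_lt_of_lt hk hp.2.2.1 hq.2.2.1)
  · exact lt_of_le_of_lt (Cardinal.mk_union_le _ _)
      (Cardinal.add_lt_of_lt hk hp.2.2.2.2.1 hq.2.2.2.2.1)
  · rintro x y (hxy | hxy) i
    · obtain ⟨d, hd⟩ := ((hp.2.2.2.2.2) hxy).1 i
      exact ⟨d, Or.inl hd⟩
    · obtain ⟨d, hd⟩ := ((hq.2.2.2.2.2) hxy).1 i
      exact ⟨d, Or.inr hd⟩

/-! ### One-step extension lemmas -/

section Extend

variable {z : K} {π : (Σ n : ℕ, ℕ × (Fin n → K)) ≃ K} {ξ : K → K}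

lemma fresh_dom {e : Set (K × K)} (he : #e < #K) : ∃ d, ∀ y, (d, y) ∉ e := by
  obtain ⟨d, hd⟩ := aux_exists_notMem (lt_of_le_of_lt (aux_mk_fst_le e) he)
  exact ⟨d, fun y hy => hd ⟨y, hy⟩⟩

lemma fresh_ran {e : Set (K × K)} (he : #e < #K) : ∃ y, ∀ d, (d, y) ∉ e := by
  obtain ⟨y, hy⟩ := aux_exists_notMem (lt_of_le_of_lt (aux_mk_snd_le e) he)
  exact ⟨y, fun d hd => hy ⟨d, hd⟩⟩

lemma insert_lt (hk : ℵ₀ ≤ #K) {e : Set (K × K)} (he : #e < #K) (a : K × K) :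
    #(insert a e : Set (K × K)) < #K :=
  lt_of_le_of_lt Cardinal.mk_insert_le
    (Cardinal.add_lt_of_lt hk he (lt_of_lt_of_le Cardinal.one_lt_aleph0 hk))

lemma extendRan (hk : ℵ₀ ≤ #K) {p : GCond K} (hp : CondOK z π ξ p) (y : K) :
    ∃ e', CondOK z π ξ (e', p.2) ∧ p.1 ⊆ e' ∧ ∃ d, (d, y) ∈ e' := by
  by_cases hy : ∃ d, (d, y) ∈ p.1
  · exact ⟨p.1, hp, subset_rfl, hy⟩
  · push_neg at hy
    obtain ⟨d, hd⟩ := fresh_dom hp.2.2.1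
    refine ⟨insert (d, y) p.1, ⟨?_, ?_, insert_lt hk hp.2.2.1 _, hp.2.2.2.1,
      hp.2.2.2.2.1, ?_⟩, Set.subset_insert _ _, d, Set.mem_insert _ _⟩
    · rintro a b b' (hab | hab) (hab' | hab')
      · simp only [Prod.mk.injEq] at hab hab'
        rw [hab.2, hab'.2]
      · simp only [Prod.mk.injEq] at hab
        obtain ⟨rfl, rfl⟩ := hab
        exact absurd hab' (hd b')
      · simp only [Prod.mk.injEq] at hab'
        obtain ⟨rfl, rfl⟩ := hab'
        exact absurd hab (hd b)
      · exact hp.1 hab hab'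
    · rintro a a' b (hab | hab) (hab' | hab')
      · simp only [Prod.mk.injEq] at hab hab'
        rw [hab.1, hab'.1]
      · simp only [Prod.mk.injEq] at hab
        obtain ⟨rfl, rfl⟩ := hab
        exact absurd hab' (hy a')
      · simp only [Prod.mk.injEq] at hab'
        obtain ⟨rfl, rfl⟩ := hab'
        exact absurd hab (hy a)
      · exact hp.2.1 hab hab'
    · intro x y' hxy
      have hc := hp.2.2.2.2.2 hxy
      refine ⟨fun i => ⟨(hc.1 i).choose, Set.mem_insert_iff.2 (Or.inr (hc.1 i).choose_spec)⟩,
        fun vd hvd => hc.2 vd (fun i => ?_)⟩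
      rcases Set.mem_insert_iff.1 (hvd i) with h | h
      · simp only [Prod.mk.injEq] at h
        obtain ⟨-, h2⟩ := h
        obtain ⟨d0, hd0⟩ := hc.1 i
        rw [h2] at hd0
        exact absurd hd0 (hy d0)
      · exact h

lemma extendDom (hk : ℵ₀ ≤ #K) {p : GCond K} (hp : CondOK z π ξ p) (d : K) :
    ∃ e', CondOK z π ξ (e', p.2) ∧ p.1 ⊆ e' ∧ ∃ y, (d, y) ∈ e' := by
  by_cases hy : ∃ y, (d, y) ∈ p.1
  · exact ⟨p.1, hp, subset_rfl, hy⟩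
  · push_neg at hy
    obtain ⟨y, hd⟩ := fresh_ran hp.2.2.1
    refine ⟨insert (d, y) p.1, ⟨?_, ?_, insert_lt hk hp.2.2.1 _, hp.2.2.2.1,
      hp.2.2.2.2.1, ?_⟩, Set.subset_insert _ _, y, Set.mem_insert _ _⟩
    · rintro a b b' (hab | hab) (hab' | hab')
      · simp only [Prod.mk.injEq] at hab hab'
        rw [hab.2, hab'.2]
      · simp only [Prod.mk.injEq] at hab
        obtain ⟨rfl, rfl⟩ := hab
        exact absurd hab' (hy b')
      · simp only [Prod.mk.injEq] at hab'
        obtain ⟨rfl, rfl⟩ := hab'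
        exact absurd hab (hy b)
      · exact hp.1 hab hab'
    · rintro a a' b (hab | hab) (hab' | hab')
      · simp only [Prod.mk.injEq] at hab hab'
        rw [hab.1, hab'.1]
      · simp only [Prod.mk.injEq] at hab
        obtain ⟨rfl, rfl⟩ := hab
        exact absurd hab' (hd a')
      · simp only [Prod.mk.injEq] at hab'
        obtain ⟨rfl, rfl⟩ := hab'
        exact absurd hab (hd a)
      · exact hp.2.1 hab hab'
    · intro x y' hxy
      have hc := hp.2.2.2.2.2 hxy
      refine ⟨fun i => ⟨(hc.1 i).choose, Set.mem_insert_iff.2 (Or.inr (hc.1 i).choose_spec)⟩,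
        fun vd hvd => hc.2 vd (fun i => ?_)⟩
      rcases Set.mem_insert_iff.1 (hvd i) with h | h
      · simp only [Prod.mk.injEq] at h
        obtain ⟨-, h2⟩ := h
        obtain ⟨d0, hd0⟩ := hc.1 i
        rw [h2] at hd0
        exact absurd hd0 (hd d0)
      · exact h

lemma extendRanList (hk : ℵ₀ ≤ #K) {p : GCond K} (hp : CondOK z π ξ p) (l : List K) :
    ∃ e', CondOK z π ξ (e', p.2) ∧ p.1 ⊆ e' ∧ ∀ y ∈ l, ∃ d, (d, y) ∈ e' := by
  induction l generalizing p with
  | nil => exact ⟨p.1, hp, subset_rfl, by simp⟩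
  | cons y l ih =>
    obtain ⟨e1, h1, hs1, d, hd⟩ := extendRan hk hp y
    obtain ⟨e2, h2, hs2, hl⟩ := ih (p := (e1, p.2)) h1
    refine ⟨e2, h2, hs1.trans hs2, fun y' hy' => ?_⟩
    rcases List.mem_cons.1 hy' with rfl | hy'
    · exact ⟨d, hs2 hd⟩
    · exact hl y' hy'

lemma extendVal (hk : ℵ₀ ≤ #K) (hw : ∃ w : K, z < w) {p : GCond K}
    (hp : CondOK z π ξ p) (x : K) :
    ∃ q, CondOK z π ξ q ∧ CLe p q ∧ ∃ y, (x, y) ∈ q.2 := by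
  classical
  by_cases hx : ∃ y, (x, y) ∈ p.2
  · exact ⟨p, hp, CLe.refl p, hx⟩
  · push_neg at hx
    obtain ⟨e', he', hsub, hpts⟩ := extendRanList hk hp (List.ofFn (pts π x))
    have hpts' : ∀ i, ∃ d, (d, pts π x i) ∈ e' := fun i =>
      hpts _ (List.mem_ofFn.2 ⟨i, rfl⟩)
    obtain ⟨vd, hvdm⟩ : ∃ vd : Fin (π.symm x).1 → K, ∀ i, (vd i, pts π x i) ∈ e' :=
      ⟨fun i => (hpts' i).choose, fun i => (hpts' i).choose_spec⟩
    obtain ⟨w, hzw⟩ := hw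
    obtain ⟨y₀, hy₀⟩ : ∃ y₀, (z < y₀ ↔ RelP z π ξ (π.symm x).1 (π.symm x).2.1 vd) := by
      by_cases hR : RelP z π ξ (π.symm x).1 (π.symm x).2.1 vd
      · exact ⟨w, by simp [hR, hzw]⟩
      · exact ⟨z, by simp [hR, lt_irrefl]⟩
    refine ⟨(e', insert (x, y₀) p.2), ⟨he'.1, he'.2.1, he'.2.2.1, ?_,
      insert_lt hk hp.2.2.2.2.1 _, ?_⟩, ⟨hsub, Set.subset_insert _ _⟩,
      y₀, Set.mem_insert _ _⟩
    · rintro a b b' (hab | hab) (hab' | hab')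
      · simp only [Prod.mk.injEq] at hab hab'
        rw [hab.2, hab'.2]
      · simp only [Prod.mk.injEq] at hab
        obtain ⟨rfl, rfl⟩ := hab
        exact absurd hab' (hx b')
      · simp only [Prod.mk.injEq] at hab'
        obtain ⟨rfl, rfl⟩ := hab'
        exact absurd hab (hx b)
      · exact hp.2.2.2.1 hab hab'
    · intro x₁ y₁ hxy
      rcases Set.mem_insert_iff.1 hxy with h | h
      · simp only [Prod.mk.injEq] at h
        obtain ⟨rfl, rfl⟩ := h
        refine ⟨fun i => ⟨vd i, hvdm i⟩, fun vd' hvd' => ?_⟩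
        have hvv : vd' = vd := funext fun i => he'.2.1 (hvd' i) (hvdm i)
        rw [hvv]
        exact hy₀
      · exact he'.2.2.2.2.2 h

end Extend

/-! ### Chains of conditions -/

section Chains

variable {z : K} {π : (Σ n : ℕ, ℕ × (Fin n → K)) ≃ K} {ξ : K → K}

lemma chainUB {C : Set (GCond K)} (hne : C.Nonempty)
    (hdir : ∀ p ∈ C, ∀ q ∈ C, CLe p q ∨ CLe q p) :
    ∀ l : List (GCond K), (∀ p ∈ l, p ∈ C) → ∃ ub ∈ C, ∀ p ∈ l, CLe p ub := by
  intro l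
  induction l with
  | nil => exact fun _ => ⟨hne.choose, hne.choose_spec, by simp⟩
  | cons q l ih =>
    intro hl
    obtain ⟨ub, hubC, hub⟩ := ih (fun p hp => hl p (List.mem_cons_of_mem _ hp))
    have hq : q ∈ C := hl q List.mem_cons_self
    rcases hdir q hq ub hubC with h | h
    · exact ⟨ub, hubC, fun p hp => by
        rcases List.mem_cons.1 hp with rfl | hp
        · exact h
        · exact hub p hp⟩
    · exact ⟨q, hq, fun p hp => by
        rcases List.mem_cons.1 hp with rfl | hp
        · exact CLe.refl _
        · exact (hub p hp).trans h⟩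

lemma chainOK {C : Set (GCond K)} (hne : C.Nonempty)
    (hOK : ∀ p ∈ C, CondOK z π ξ p)
    (hdir : ∀ p ∈ C, ∀ q ∈ C, CLe p q ∨ CLe q p) :
    Fnl (⋃ p ∈ C, p.1) ∧ Inj (⋃ p ∈ C, p.1) ∧ Fnl (⋃ p ∈ C, p.2) ∧
      Coh z π ξ (⋃ p ∈ C, p.1) (⋃ p ∈ C, p.2) := by
  have two : ∀ {ab ab' : K × K}, ab ∈ (⋃ p ∈ C, p.1) → ab' ∈ (⋃ p ∈ C, p.1) →
      ∃ q ∈ C, ab ∈ q.1 ∧ ab' ∈ q.1 := by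
    intro ab ab' h h'
    simp only [Set.mem_iUnion] at h h'
    obtain ⟨q, hq, hab⟩ := h
    obtain ⟨q', hq', hab'⟩ := h'
    rcases hdir q hq q' hq' with hle | hle
    · exact ⟨q', hq', hle.1 hab, hab'⟩
    · exact ⟨q, hq, hab, hle.1 hab'⟩
  refine ⟨?_, ?_, ?_, ?_⟩
  · intro a b b' h h'
    obtain ⟨q, hq, h1, h2⟩ := two h h'
    exact (hOK q hq).1 h1 h2
  · intro a a' b h h'
    obtain ⟨q, hq, h1, h2⟩ := two h h'
    exact (hOK q hq).2.1 h1 h2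
  · intro a b b' h h'
    simp only [Set.mem_iUnion] at h h'
    obtain ⟨q, hq, hab⟩ := h
    obtain ⟨q', hq', hab'⟩ := h'
    rcases hdir q hq q' hq' with hle | hle
    · exact (hOK q' hq').2.2.2.1 (hle.2 hab) hab'
    · exact (hOK q hq).2.2.2.1 hab (hle.2 hab')
  · intro x y hxy
    simp only [Set.mem_iUnion] at hxy
    obtain ⟨q, hq, hxyq⟩ := hxy
    have hcq := (hOK q hq).2.2.2.2.2 hxyq
    refine ⟨fun i => ?_, fun vd hvd => ?_⟩
    · obtain ⟨d, hd⟩ := hcq.1 i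
      exact ⟨d, Set.mem_iUnion.2 ⟨q, Set.mem_iUnion.2 ⟨hq, hd⟩⟩⟩
    · have hch : ∀ i, ∃ q' ∈ C, (vd i, pts π x i) ∈ q'.1 := by
        intro i
        have := hvd i
        simp only [Set.mem_iUnion] at this
        obtain ⟨q', hq', h⟩ := this
        exact ⟨q', hq', h⟩
      obtain ⟨ub, hubC, hub⟩ := chainUB hne hdir
        (q :: List.ofFn (fun i => (hch i).choose))
        (by
          intro p hp
          rcases List.mem_cons.1 hp with rfl | hp
          · exact hq
          · obtain ⟨i, rfl⟩ := List.mem_ofFn.1 hp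
            exact (hch i).choose_spec.1)
      have hxyub : (x, y) ∈ ub.2 := (hub q List.mem_cons_self).2 hxyq
      refine ((hOK ub hubC).2.2.2.2.2 hxyub).2 vd (fun i => ?_)
      have hmem : (hch i).choose ∈ q :: List.ofFn (fun i => (hch i).choose) :=
        List.mem_cons_of_mem _ (List.mem_ofFn.2 ⟨i, rfl⟩)
      exact (hub _ hmem).1 (hch i).choose_spec.2

end Chains

/-! ### Generic existence -/

def DenseAbove (z : K) (π : (Σ n : ℕ, ℕ × (Fin n → K)) ≃ K) (ξ : K → K)
    (D : Set (GCond K)) : Prop :=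
  ∀ p, CondOK z π ξ p → ∃ q ∈ D, CondOK z π ξ q ∧ CLe p q

theorem genericExists (hreg : (#K).IsRegular) (hunc : ℵ₀ < #K)
    {z : K} {π : (Σ n : ℕ, ℕ × (Fin n → K)) ≃ K} {ξ : K → K} (hw : ∃ w : K, z < w)
    {p₀ : GCond K} (h0 : CondOK z π ξ p₀)
    (ι : Type u) (D : ι → Set (GCond K)) (hι : #ι ≤ #K)
    (hD : ∀ i, DenseAbove z π ξ (D i)) :
    ∃ (σ : K ≃ K) (ζ : K → K), TotalCoh z π ξ σ ζ ∧ Below p₀ σ ζ ∧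
      ∀ i, ∃ p ∈ D i, CondOK z π ξ p ∧ Below p σ ζ := by
  classical
  have hk : ℵ₀ ≤ #K := le_of_lt hunc
  -- tasks
  set T := (ι ⊕ K) ⊕ (K ⊕ K) with hT
  have hTle : #T ≤ #K := by
    have h1 : #T = (#ι + #K) + (#K + #K) := by
      simp [hT, Cardinal.mk_sum, Cardinal.lift_id]
    rw [h1]
    have : #ι + #K ≤ #K + #K := add_le_add hι le_rfl
    calc (#ι + #K) + (#K + #K) ≤ (#K + #K) + (#K + #K) := add_le_add this le_rfl
      _ = #K := by rw [Cardinal.add_eq_self hk, Cardinal.add_eq_self hk]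
  obtain ⟨emb⟩ : Nonempty (T ↪ K) := Cardinal.le_def _ _ |>.1 hTle
  -- what it means to have completed a task
  let TaskDone : T → GCond K → Prop := fun t q =>
    match t with
    | Sum.inl (Sum.inl i) => q ∈ D i
    | Sum.inl (Sum.inr d) => ∃ y, (d, y) ∈ q.1
    | Sum.inr (Sum.inl y) => ∃ d, (d, y) ∈ q.1
    | Sum.inr (Sum.inr x) => ∃ y, (x, y) ∈ q.2
  -- the step function
  have step : ∀ (x : K) (p : GCond K), ∃ q : GCond K,
      CondOK z π ξ p → (CondOK z π ξ q ∧ CLe p q ∧ ∀ t, emb t = x → TaskDone t q) := by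
    intro x p
    by_cases hp : CondOK z π ξ p
    · by_cases ht : ∃ t, emb t = x
      · obtain ⟨t, rfl⟩ := ht
        have huniq : ∀ t', emb t' = emb t → t' = t := fun t' h => emb.injective h
        match t with
        | Sum.inl (Sum.inl i) =>
          obtain ⟨q, hqD, hqOK, hle⟩ := hD i p hp
          exact ⟨q, fun _ => ⟨hqOK, hle, fun t' ht' => by rw [huniq t' ht']; exact hqD⟩⟩
        | Sum.inl (Sum.inr d) =>
          obtain ⟨e', hOK, hsub, hy⟩ := extendDom hk hp d
          exact ⟨(e', p.2), fun _ => ⟨hOK, ⟨hsub, subset_rfl⟩,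
            fun t' ht' => by rw [huniq t' ht']; exact hy⟩⟩
        | Sum.inr (Sum.inl y) =>
          obtain ⟨e', hOK, hsub, hd⟩ := extendRan hk hp y
          exact ⟨(e', p.2), fun _ => ⟨hOK, ⟨hsub, subset_rfl⟩,
            fun t' ht' => by rw [huniq t' ht']; exact hd⟩⟩
        | Sum.inr (Sum.inr x₀) =>
          obtain ⟨q, hOK, hle, hy⟩ := extendVal hk hw hp x₀
          exact ⟨q, fun _ => ⟨hOK, hle, fun t' ht' => by rw [huniq t' ht']; exact hy⟩⟩
      · exact ⟨p, fun _ => ⟨hp, CLe.refl p, fun t' ht' => absurd ⟨t', ht'⟩ ht⟩⟩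
    · exact ⟨p, fun h => absurd h hp⟩
  choose stepF stepP using step
  -- the well-order
  obtain ⟨r, wo, hr⟩ := Cardinal.ord_eq K
  haveI : IsWellOrder K r := wo
  have hseg : ∀ x : K, #{y : K | r y x} < #K := by
    intro x
    have h1 : Ordinal.typein r x < Ordinal.type r := Ordinal.typein_lt_type r x
    rw [← hr] at h1
    have h2 : #{y // r y x} < #K := by
      rw [← Ordinal.card_typein]
      exact Cardinal.lt_ord.1 h1
    exact h2
  -- the recursion
  let bigC : K → (∀ y : K, GCond K) → Set (GCond K) := fun x g =>
    insert p₀ {q | ∃ y, r y x ∧ q = g y}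
  let bigU : K → (∀ y : K, GCond K) → GCond K := fun x g =>
    (⋃ p ∈ bigC x g, p.1, ⋃ p ∈ bigC x g, p.2)
  let g : K → GCond K := wo.wf.fix (fun x IH => stepF x (bigU x (fun y =>
    if h : r y x then IH y h else p₀)))
  have gEq : ∀ x, g x = stepF x (bigU x (fun y => if r y x then g y else p₀)) := by
    intro x
    show wo.wf.fix _ x = _
    rw [WellFounded.fix_eq]
    rfl
  -- main induction
  have good : ∀ x : K, CondOK z π ξ (g x) ∧ CLe p₀ (g x) ∧
      (∀ y, r y x → CLe (g y) (g x)) ∧ ∀ t, emb t = x → TaskDone t (g x) := by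
    intro x
    induction x using wo.wf.induction with
    | _ x IH =>
    set g' : K → GCond K := fun y => if r y x then g y else p₀ with hg'
    have hCmem : ∀ q ∈ bigC x g', CondOK z π ξ q := by
      rintro q hq
      rcases Set.mem_insert_iff.1 hq with rfl | ⟨y, hy, rfl⟩
      · exact h0
      · rw [hg']
        simp only [if_pos hy]
        exact (IH y hy).1
    have hCle : ∀ q ∈ bigC x g', ∀ q' ∈ bigC x g', CLe q q' ∨ CLe q' q := by
      rintro q hq q' hq'
      rcases Set.mem_insert_iff.1 hq with rfl | ⟨y, hy, rfl⟩
      · rcases Set.mem_insert_iff.1 hq' with rfl | ⟨y', hy', rfl⟩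
        · exact Or.inl (CLe.refl _)
        · left; rw [hg']; simp only [if_pos hy']; exact (IH y' hy').2.1
      · rcases Set.mem_insert_iff.1 hq' with rfl | ⟨y', hy', rfl⟩
        · right; rw [hg']; simp only [if_pos hy]; exact (IH y hy).2.1
        · rcases trichotomous_of r y y' with h | h | h
          · left
            rw [hg']; simp only [if_pos hy, if_pos hy']
            exact (IH y' hy').2.2.1 y h
          · subst h; exact Or.inl (CLe.refl _)
          · right
            rw [hg']; simp only [if_pos hy, if_pos hy']
            exact (IH y hy).2.2.1 y' h
    have hne : (bigC x g').Nonempty := ⟨p₀, Set.mem_insert _ _⟩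
    have hchain := chainOK (z := z) (π := π) (ξ := ξ) hne hCmem hCle
    -- size bounds
    have hsize1 : #(⋃ p ∈ bigC x g', p.1) < #K := by
      have hEq : (⋃ p ∈ bigC x g', p.1) = p₀.1 ∪ ⋃ y : {y : K | r y x}, (g' y).1 := by
        ext ab
        simp only [bigC, Set.mem_insert_iff, Set.mem_iUnion, Set.mem_union,
          Set.mem_setOf_eq]
        constructor
        · rintro ⟨p, (rfl | ⟨y, hy, rfl⟩), h⟩
          · exact Or.inl h
          · exact Or.inr ⟨⟨y, hy⟩, h⟩
        · rintro (h | ⟨⟨y, hy⟩, h⟩)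
          · exact ⟨p₀, Or.inl rfl, h⟩
          · exact ⟨g' y, Or.inr ⟨y, hy, rfl⟩, h⟩
      rw [hEq]
      apply lt_of_le_of_lt (Cardinal.mk_union_le _ _)
      apply Cardinal.add_lt_of_lt hk h0.2.2.1
      apply lt_of_le_of_lt (Cardinal.mk_iUnion_le_sum_mk)
      apply Cardinal.sum_lt_of_isRegular hreg (hseg x)
      rintro ⟨y, hy⟩
      have hy' : r y x := hy
      have hgy : g' y = g y := if_pos hy'
      show #(g' y).1 < #K
      rw [hgy]
      exact (IH y hy').1.2.2.1
    have hsize2 : #(⋃ p ∈ bigC x g', p.2) < #K := by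
      have hEq : (⋃ p ∈ bigC x g', p.2) = p₀.2 ∪ ⋃ y : {y : K | r y x}, (g' y).2 := by
        ext ab
        simp only [bigC, Set.mem_insert_iff, Set.mem_iUnion, Set.mem_union,
          Set.mem_setOf_eq]
        constructor
        · rintro ⟨p, (rfl | ⟨y, hy, rfl⟩), h⟩
          · exact Or.inl h
          · exact Or.inr ⟨⟨y, hy⟩, h⟩
        · rintro (h | ⟨⟨y, hy⟩, h⟩)
          · exact ⟨p₀, Or.inl rfl, h⟩
          · exact ⟨g' y, Or.inr ⟨y, hy, rfl⟩, h⟩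
      rw [hEq]
      apply lt_of_le_of_lt (Cardinal.mk_union_le _ _)
      apply Cardinal.add_lt_of_lt hk h0.2.2.2.2.1
      apply lt_of_le_of_lt (Cardinal.mk_iUnion_le_sum_mk)
      apply Cardinal.sum_lt_of_isRegular hreg (hseg x)
      rintro ⟨y, hy⟩
      have hy' : r y x := hy
      have hgy : g' y = g y := if_pos hy'
      show #(g' y).2 < #K
      rw [hgy]
      exact (IH y hy').1.2.2.2.2.1
    have hUOK : CondOK z π ξ (bigU x g') :=
      ⟨hchain.1, hchain.2.1, hsize1, hchain.2.2.1, hsize2, hchain.2.2.2⟩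
    have hstep := stepP x (bigU x g') hUOK
    have hgx : g x = stepF x (bigU x g') := gEq x
    rw [← hgx] at hstep
    have hUle : ∀ y, r y x → CLe (g y) (bigU x g') := by
      intro y hy
      constructor
      · intro ab hab
        refine Set.mem_iUnion.2 ⟨g' y, Set.mem_iUnion.2 ⟨Or.inr ⟨y, hy, rfl⟩, ?_⟩⟩
        rw [hg']; simpa only [if_pos hy] using hab
      · intro ab hab
        refine Set.mem_iUnion.2 ⟨g' y, Set.mem_iUnion.2 ⟨Or.inr ⟨y, hy, rfl⟩, ?_⟩⟩
        rw [hg']; simpa only [if_pos hy] using hab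
    have hp₀le : CLe p₀ (bigU x g') := by
      constructor
      · intro ab hab
        exact Set.mem_iUnion.2 ⟨p₀, Set.mem_iUnion.2 ⟨Or.inl rfl, hab⟩⟩
      · intro ab hab
        exact Set.mem_iUnion.2 ⟨p₀, Set.mem_iUnion.2 ⟨Or.inl rfl, hab⟩⟩
    exact ⟨hstep.1, hp₀le.trans hstep.2.1,
      fun y hy => (hUle y hy).trans hstep.2.1, hstep.2.2⟩
  -- the global chain
  have hAll : ∀ x y : K, CLe (g x) (g y) ∨ CLe (g y) (g x) := by
    intro x y
    rcases trichotomous_of r x y with h | h | h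
    · exact Or.inl ((good y).2.2.1 x h)
    · subst h; exact Or.inl (CLe.refl _)
    · exact Or.inr ((good x).2.2.1 y h)
  haveI hKne : Nonempty K := Cardinal.mk_ne_zero_iff.1 (Cardinal.aleph0_pos.trans hunc).ne'
  have hglobOK := chainOK (z := z) (π := π) (ξ := ξ) (C := Set.range g)
    ⟨g (Classical.arbitrary K), Set.mem_range_self _⟩
    (by rintro q ⟨x, rfl⟩; exact (good x).1)
    (by rintro q ⟨x, rfl⟩ q' ⟨x', rfl⟩; exact hAll x x')
  set E : Set (K × K) := ⋃ p ∈ Set.range g, p.1 with hE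
  set Uu : Set (K × K) := ⋃ p ∈ Set.range g, p.2 with hUu
  have hgsubE : ∀ x, (g x).1 ⊆ E := fun x ab hab =>
    Set.mem_iUnion.2 ⟨g x, Set.mem_iUnion.2 ⟨Set.mem_range_self x, hab⟩⟩
  have hgsubU : ∀ x, (g x).2 ⊆ Uu := fun x ab hab =>
    Set.mem_iUnion.2 ⟨g x, Set.mem_iUnion.2 ⟨Set.mem_range_self x, hab⟩⟩
  have htot : ∀ d : K, ∃ y, (d, y) ∈ E := by
    intro d
    obtain ⟨y, hy⟩ := (good (emb (Sum.inl (Sum.inr d)))).2.2.2 (Sum.inl (Sum.inr d)) rfl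
    exact ⟨y, hgsubE _ hy⟩
  have hsurj : ∀ y : K, ∃ d, (d, y) ∈ E := by
    intro y
    obtain ⟨d, hd⟩ := (good (emb (Sum.inr (Sum.inl y)))).2.2.2 (Sum.inr (Sum.inl y)) rfl
    exact ⟨d, hgsubE _ hd⟩
  have hutot : ∀ x : K, ∃ y, (x, y) ∈ Uu := by
    intro x
    obtain ⟨y, hy⟩ := (good (emb (Sum.inr (Sum.inr x)))).2.2.2 (Sum.inr (Sum.inr x)) rfl
    exact ⟨y, hgsubU _ hy⟩
  -- build σ and ζ
  let f : K → K := fun d => (htot d).choose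
  have hfE : ∀ d, (d, f d) ∈ E := fun d => (htot d).choose_spec
  have hfinj : Function.Injective f := by
    intro d d' h
    exact hglobOK.2.1 (hfE d) (h ▸ hfE d')
  have hfsurj : Function.Surjective f := by
    intro y
    obtain ⟨d, hd⟩ := hsurj y
    exact ⟨d, hglobOK.1 (hfE d) hd⟩
  let σ : K ≃ K := Equiv.ofBijective f ⟨hfinj, hfsurj⟩
  let ζ : K → K := fun x => (hutot x).choose
  have hζU : ∀ x, (x, ζ x) ∈ Uu := fun x => (hutot x).choose_spec
  have hEσ : E ⊆ egraph σ := by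
    rintro ⟨d, y⟩ hd
    exact hglobOK.1 (hfE d) hd
  have hσE : egraph σ ⊆ E := by
    rintro ⟨d, y⟩ hd
    have : f d = y := hd
    rw [← this]
    exact hfE d
  have hUζ : Uu ⊆ ugraph ζ := by
    rintro ⟨x, y⟩ hx
    exact hglobOK.2.2.1 (hζU x) hx
  have hζUu : ugraph ζ ⊆ Uu := by
    rintro ⟨x, y⟩ hx
    have : ζ x = y := hx
    rw [← this]
    exact hζU x
  have hTC : TotalCoh z π ξ σ ζ := by
    intro x y hxy
    have hc := hglobOK.2.2.2 (hζUu hxy)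
    refine ⟨fun i => ?_, fun vd hvd => hc.2 vd (fun i => hσE (hvd i))⟩
    obtain ⟨d, hd⟩ := hc.1 i
    exact ⟨d, hEσ hd⟩
  refine ⟨σ, ζ, hTC, ?_, ?_⟩
  · have x₀ : K := Classical.arbitrary K
    exact ⟨fun ab hab => hEσ (hgsubE x₀ ((good x₀).2.1.1 hab)),
      fun ab hab => hUζ (hgsubU x₀ ((good x₀).2.1.2 hab))⟩
  · intro i
    have hi := (good (emb (Sum.inl (Sum.inl i)))).2.2.2 (Sum.inl (Sum.inl i)) rfl
    refine ⟨g (emb (Sum.inl (Sum.inl i))), hi, (good _).1, ?_, ?_⟩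
    · exact fun ab hab => hEσ (hgsubE _ hab)
    · exact fun ab hab => hUζ (hgsubU _ hab)

/-! ### Back-and-forth systems and transfer of conditions -/

/-- The data of `EquivRk` without the requirement `∅ ∈ I a`. -/
def Sys (z : K) (π : (Σ n : ℕ, ℕ × (Fin n → K)) ≃ K) (ξ ζ : K → K)
    (a : Ordinal.{u}) (I : Ordinal.{u} → Set (Set (K × K))) : Prop :=
  (∀ b : Ordinal.{u}, ∀ s ∈ I b, PIso z π ξ ζ s) ∧
  ∀ b c : Ordinal.{u}, c < b → b ≤ a → ∀ s ∈ I b,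
    (∀ A : Set K, #A < #K → ∃ s' ∈ I c, s ⊆ s' ∧ A ⊆ Prod.fst '' s') ∧
    (∀ B : Set K, #B < #K → ∃ s' ∈ I c, s ⊆ s' ∧ B ⊆ Prod.snd '' s')

/-- `p` and `q` are matched along the partial isomorphism `s`. -/
def MatchC (s : Set (K × K)) (p q : GCond K) : Prop :=
  p.2 = q.2 ∧ (∀ d y, (d, y) ∈ p.1 → ∃ d', (d', y) ∈ q.1 ∧ (d, d') ∈ s) ∧
  (∀ d' y, (d', y) ∈ q.1 → ∃ d, (d, y) ∈ p.1 ∧ (d, d') ∈ s)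

def sSwap (s : Set (K × K)) : Set (K × K) := {xy | (xy.2, xy.1) ∈ s}

lemma sSwap_sSwap (s : Set (K × K)) : sSwap (sSwap s) = s := rfl

lemma pisoSwap {z : K} {π : (Σ n : ℕ, ℕ × (Fin n → K)) ≃ K} {ξ ζ : K → K}
    {s : Set (K × K)} (h : PIso z π ξ ζ s) : PIso z π ζ ξ (sSwap s) := by
  obtain ⟨h1, h2, h3⟩ := h
  refine ⟨?_, ?_, ?_⟩
  · have : #(sSwap s) = #s := by
      refine Cardinal.mk_congr ⟨fun x => ⟨(x.1.2, x.1.1), x.2⟩,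
        fun x => ⟨(x.1.2, x.1.1), x.2⟩, ?_, ?_⟩
      · rintro ⟨⟨a, b⟩, hx⟩; rfl
      · rintro ⟨⟨a, b⟩, hx⟩; rfl
    rwa [this]
  · rintro ⟨a, b⟩ hab ⟨a', b'⟩ hab'
    exact (h2 (b, a) hab (b', a') hab').symm
  · intro n m v w hvw
    exact (h3 n m w v hvw).symm

lemma sysSwap {z : K} {π : (Σ n : ℕ, ℕ × (Fin n → K)) ≃ K} {ξ ζ : K → K}
    {a : Ordinal.{u}} {I : Ordinal.{u} → Set (Set (K × K))} (h : Sys z π ξ ζ a I) :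
    Sys z π ζ ξ a (fun b => sSwap '' I b) := by
  constructor
  · rintro b s ⟨s₀, hs₀, rfl⟩
    exact pisoSwap (h.1 b s₀ hs₀)
  · rintro b c hcb hba s ⟨s₀, hs₀, rfl⟩
    have h2 := h.2 b c hcb hba s₀ hs₀
    constructor
    · intro A hA
      obtain ⟨s', hs', hsub, hcov⟩ := h2.2 A hA
      refine ⟨sSwap s', ⟨s', hs', rfl⟩, fun ab hab => hsub hab, fun x hx => ?_⟩
      obtain ⟨ab, hab, rfl⟩ := hcov hx
      exact ⟨(ab.2, ab.1), hab, rfl⟩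
    · intro B hB
      obtain ⟨s', hs', hsub, hcov⟩ := h2.1 B hB
      refine ⟨sSwap s', ⟨s', hs', rfl⟩, fun ab hab => hsub hab, fun x hx => ?_⟩
      obtain ⟨ab, hab, rfl⟩ := hcov hx
      exact ⟨(ab.2, ab.1), hab, rfl⟩

lemma matchSwap {s : Set (K × K)} {p q : GCond K} (h : MatchC s p q) :
    MatchC (sSwap s) q p := by
  refine ⟨h.1.symm, ?_, ?_⟩
  · intro d y hd
    obtain ⟨d', hd', hs⟩ := h.2.2 d y hd
    exact ⟨d', hd', hs⟩
  · intro d' y hd'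
    obtain ⟨d, hd, hs⟩ := h.2.1 d' y hd'
    exact ⟨d, hd, hs⟩

section Lift

variable {z : K} {π : (Σ n : ℕ, ℕ × (Fin n → K)) ≃ K}

lemma liftLeft {ξ ζ : K → K} {a : Ordinal.{u}} {I : Ordinal.{u} → Set (Set (K × K))}
    (hS : Sys z π ξ ζ a I) {b c : Ordinal.{u}} (hcb : c < b) (hba : b ≤ a)
    {s : Set (K × K)} (hs : s ∈ I b) {p q q' : GCond K} (hm : MatchC s p q)
    (hq' : CondOK z π ζ q') (hle : CLe q q') :
    ∃ s' ∈ I c, s ⊆ s' ∧ ∃ p', CondOK z π ξ p' ∧ CLe p p' ∧ MatchC s' p' q' := by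
  classical
  have hB : #{d' : K | ∃ y, (d', y) ∈ q'.1} < #K :=
    lt_of_le_of_lt (aux_mk_fst_le q'.1) hq'.2.2.1
  obtain ⟨s', hs', hss', hcov⟩ := (hS.2 b c hcb hba s hs).2 _ hB
  have hpiso := hS.1 c s' hs'
  have hcov' : ∀ d' y, (d', y) ∈ q'.1 → ∃ d, (d, d') ∈ s' := by
    intro d' y hd'
    obtain ⟨ab, hab, h2⟩ := hcov ⟨y, hd'⟩
    exact ⟨ab.1, by rw [← h2]; exact hab⟩
  set e' : Set (K × K) := {dy | ∃ d', (d', dy.2) ∈ q'.1 ∧ (dy.1, d') ∈ s'} with he'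
  have hFnl : Fnl e' := by
    rintro d y₁ y₂ h1 h2
    obtain ⟨d₁', hq1, hs1⟩ := h1
    obtain ⟨d₂', hq2, hs2⟩ := h2
    have hd' : d₁' = d₂' := (hpiso.2.1 (d, d₁') hs1 (d, d₂') hs2).1 rfl
    rw [hd'] at hq1
    exact hq'.1 hq1 hq2
  have hInj : Inj e' := by
    rintro d₁ d₂ y h1 h2
    obtain ⟨d₁', hq1, hs1⟩ := h1
    obtain ⟨d₂', hq2, hs2⟩ := h2
    have hd' : d₁' = d₂' := hq'.2.1 hq1 hq2
    rw [hd'] at hs1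
    exact (hpiso.2.1 (d₁, d₂') hs1 (d₂, d₂') hs2).2 rfl
  have hSmall : #e' < #K := by
    refine lt_of_le_of_lt (Cardinal.mk_le_of_injective
      (f := fun x : e' => (⟨(x.2.choose, x.1.2), x.2.choose_spec.1⟩ : q'.1)) ?_) hq'.2.2.1
    rintro ⟨⟨d₁, y₁⟩, h1⟩ ⟨⟨d₂, y₂⟩, h2⟩ heq
    have hy : y₁ = y₂ := congrArg (fun t : q'.1 => (t : K × K).2) heq
    have hd' : h1.choose = h2.choose := congrArg (fun t : q'.1 => (t : K × K).1) heq
    have hs1 := h1.choose_spec.2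
    have hs2 := h2.choose_spec.2
    rw [hd'] at hs1
    have hdd : d₁ = d₂ := (hpiso.2.1 (d₁, h2.choose) hs1 (d₂, h2.choose) hs2).2 rfl
    apply Subtype.ext
    simp [hdd, hy]
  have hCoh : Coh z π ξ e' q'.2 := by
    intro x y₀ hxy
    have hc := hq'.2.2.2.2.2 hxy
    constructor
    · intro i
      obtain ⟨d', hd'⟩ := hc.1 i
      obtain ⟨d, hd⟩ := hcov' d' _ hd'
      exact ⟨d, d', hd', hd⟩
    · intro vd hvd
      have hch : ∀ i, ∃ d', (d', pts π x i) ∈ q'.1 ∧ (vd i, d') ∈ s' := fun i => hvd i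
      have h1 : ∀ i, ((hch i).choose, pts π x i) ∈ q'.1 := fun i => (hch i).choose_spec.1
      have h2 : ∀ i, (vd i, (hch i).choose) ∈ s' := fun i => (hch i).choose_spec.2
      have hsgn := hc.2 (fun i => (hch i).choose) h1
      have hrel := hpiso.2.2 (π.symm x).1 (π.symm x).2.1 vd (fun i => (hch i).choose) h2
      exact hsgn.trans hrel.symm
  refine ⟨s', hs', hss', (e', q'.2),
    ⟨hFnl, hInj, hSmall, hq'.2.2.2.1, hq'.2.2.2.2.1, hCoh⟩, ⟨?_, ?_⟩, rfl, ?_, ?_⟩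
  · rintro ⟨d, y⟩ hdy
    obtain ⟨d', hd', hds⟩ := hm.2.1 d y hdy
    exact ⟨d', hle.1 hd', hss' hds⟩
  · intro ab hab
    exact hle.2 (hm.1 ▸ hab)
  · intro d y hdy
    exact hdy
  · intro d' y hd'
    obtain ⟨ab, hab, h2⟩ := hcov ⟨y, hd'⟩
    refine ⟨ab.1, ⟨d', hd', ?_⟩, ?_⟩
    · rw [← h2]; exact hab
    · rw [← h2]; exact hab

lemma liftRight {ξ ζ : K → K} {a : Ordinal.{u}} {I : Ordinal.{u} → Set (Set (K × K))}
    (hS : Sys z π ξ ζ a I) {b c : Ordinal.{u}} (hcb : c < b) (hba : b ≤ a)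
    {s : Set (K × K)} (hs : s ∈ I b) {p q p' : GCond K} (hm : MatchC s p q)
    (hp' : CondOK z π ξ p') (hle : CLe p p') :
    ∃ s' ∈ I c, s ⊆ s' ∧ ∃ q', CondOK z π ζ q' ∧ CLe q q' ∧ MatchC s' p' q' := by
  have hS' := sysSwap hS
  have hsw : sSwap s ∈ (fun b => sSwap '' I b) b := ⟨s, hs, rfl⟩
  obtain ⟨st, hmem, hsub, q'', hOK, hle', hm'⟩ :=
    liftLeft hS' hcb hba hsw (matchSwap hm) hp' hle
  obtain ⟨s₂, hs₂, rfl⟩ := hmem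
  refine ⟨s₂, hs₂, ?_, q'', hOK, hle', ?_⟩
  · intro ab hab
    exact hsub (show (ab.2, ab.1) ∈ sSwap s from hab)
  · have := matchSwap hm'
    rwa [sSwap_sSwap] at this

end Lift

/-! ### The forcing package -/

section PkgSec

variable (z : K) (π : (Σ n : ℕ, ℕ × (Fin n → K)) ≃ K)

def MonoP (P : (K → K) → GCond K → Prop) : Prop :=
  ∀ ξ p q, CondOK z π ξ p → CondOK z π ξ q → CLe p q → P ξ p → P ξ q

def TruthyP (B : Set (K → K)) (P : (K → K) → GCond K → Prop) : Prop :=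
  ∀ ξ : K → K, ∃ (ι : Type u) (D : ι → Set (GCond K)), #ι ≤ #K ∧
    (∀ i, DenseAbove z π ξ (D i)) ∧
    ∀ (σ : K ≃ K) (ζ : K → K), TotalCoh z π ξ σ ζ →
      (∀ i, ∃ p ∈ D i, CondOK z π ξ p ∧ Below p σ ζ) →
      (ζ ∈ B ↔ ∃ p, CondOK z π ξ p ∧ Below p σ ζ ∧ P ξ p)

def TransfP (P : (K → K) → GCond K → Prop) (α : Ordinal.{u}) : Prop :=
  ∀ ξ ζ (a : Ordinal.{u}) (I : Ordinal.{u} → Set (Set (K × K))),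
    Sys z π ξ ζ a I → ∀ b, α ≤ b → b ≤ a →
    ∀ s ∈ I b, ∀ p q, CondOK z π ξ p → CondOK z π ζ q → MatchC s p q →
      (P ξ p ↔ P ζ q)

def Pkg (B : Set (K → K)) : Prop :=
  ∃ α : Ordinal.{u}, α < (Order.succ #K).ord ∧
    ∃ P : (K → K) → GCond K → Prop, MonoP z π P ∧ TruthyP z π B P ∧ TransfP z π P α

end PkgSec

section PkgCases

variable {z : K} {π : (Σ n : ℕ, ℕ × (Fin n → K)) ≃ K}

lemma ord_succ_isLimit (hunc : ℵ₀ < #K) : Order.IsSuccLimit ((Order.succ (#K : Cardinal.{u})).ord) :=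
  Cardinal.isSuccLimit_ord (le_trans (le_of_lt hunc) (le_of_lt (Order.lt_succ _)))

lemma pkg_basic (hreg : (#K).IsRegular) (hunc : ℵ₀ < #K)
    {S : Set (K → K)} (hS : IsBasicOpen S) : Pkg z π S := by
  classical
  have hk : ℵ₀ ≤ #K := le_of_lt hunc
  rcases hS with ⟨Y, ν, hY, rfl⟩ | rfl
  · refine ⟨0, (ord_succ_isLimit hunc).pos, fun _ p => ∀ x ∈ Y, (x, ν x) ∈ p.2,
      ?_, ?_, ?_⟩
    · intro ξ p q _ _ hle hP x hx
      exact hle.2 (hP x hx)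
    · intro ξ
      refine ⟨PEmpty.{u+1}, fun i => i.elim, ?_, fun i => i.elim, ?_⟩
      · simp
      · intro σ ζ htc _
        constructor
        · intro hζ
          -- construct the witnessing condition
          set V : Set K := ⋃ x ∈ Y, Set.range (pts π x) with hV
          set eY : Set (K × K) := {ab | σ ab.1 = ab.2 ∧ ab.2 ∈ V} with heY
          set uY : Set (K × K) := {xy | xy.1 ∈ Y ∧ ζ xy.1 = xy.2} with huY
          have hbel : Below (eY, uY) σ ζ := ⟨fun ab hab => hab.1, fun xy hxy => hxy.2⟩
          have hVsmall : #V < #K := by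
            rw [hV, Set.biUnion_eq_iUnion]
            apply lt_of_le_of_lt (Cardinal.mk_iUnion_le_sum_mk)
            apply Cardinal.sum_lt_of_isRegular hreg hY
            intro x
            exact lt_of_lt_of_le (Set.Finite.lt_aleph0 (Set.finite_range _)) hk
          have h1 : #eY < #K := by
            refine lt_of_le_of_lt (Cardinal.mk_le_of_injective
              (f := fun ab : eY => (⟨ab.1.2, ab.2.2⟩ : V)) ?_) hVsmall
            rintro ⟨⟨a, b⟩, hab⟩ ⟨⟨a', b'⟩, hab'⟩ h
            have hb : b = b' := congrArg Subtype.val h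
            apply Subtype.ext
            have ha1 : σ a = b := hab.1
            have ha2 : σ a' = b' := hab'.1
            have : a = a' := by
              apply σ.injective
              rw [ha1, ha2, hb]
            simp [this, hb]
          have h2 : #uY < #K := by
            refine lt_of_le_of_lt (Cardinal.mk_le_of_injective
              (f := fun xy : uY => (⟨xy.1.1, xy.2.1⟩ : Y)) ?_) hY
            rintro ⟨⟨x, y⟩, hxy⟩ ⟨⟨x', y'⟩, hxy'⟩ h
            have hx : x = x' := congrArg Subtype.val h
            apply Subtype.ext
            have hy1 : ζ x = y := hxy.2
            have hy2 : ζ x' = y' := hxy'.2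
            have : y = y' := by rw [← hy1, ← hy2, hx]
            simp [hx, this]
          have hex : ∀ ⦃x y⦄, (x, y) ∈ uY → ∀ i, ∃ d, (d, pts π x i) ∈ eY := by
            intro x y hxy i
            refine ⟨σ.symm (pts π x i), ⟨by simp, ?_⟩⟩
            exact Set.mem_biUnion hxy.1 ⟨i, rfl⟩
          refine ⟨(eY, uY), subCondOK htc hbel h1 h2 hex, hbel, fun x hx => ?_⟩
          exact ⟨hx, hζ x hx⟩
        · rintro ⟨p, hpOK, hpb, hP⟩ x hx
          exact hpb.2 (hP x hx)
    · intro ξ ζ a I hS b hb hba s hs p q hpOK hqOK hm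
      show (∀ x ∈ Y, (x, ν x) ∈ p.2) ↔ (∀ x ∈ Y, (x, ν x) ∈ q.2)
      rw [hm.1]
  · refine ⟨0, (ord_succ_isLimit hunc).pos, fun _ _ => False, ?_, ?_, ?_⟩
    · intro ξ p q _ _ _ h
      exact h.elim
    · intro ξ
      refine ⟨PEmpty.{u+1}, fun i => i.elim, by simp, fun i => i.elim, ?_⟩
      intro σ ζ _ _
      simp
    · intro ξ ζ a I hS b hb hba s hs p q hpOK hqOK hm
      exact Iff.rfl

lemma pkg_compl (hunc : ℵ₀ < #K) {B : Set (K → K)} (h : Pkg z π B) : Pkg z π Bᶜ := by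
  classical
  have hk : ℵ₀ ≤ #K := le_of_lt hunc
  obtain ⟨α, hα, P, hM, hT, hTr⟩ := h
  refine ⟨Order.succ α, (ord_succ_isLimit hunc).succ_lt hα,
    fun ξ p => ∀ q, CondOK z π ξ q → CLe p q → ¬ P ξ q, ?_, ?_, ?_⟩
  · intro ξ p q hpOK hqOK hle hP r hrOK hler
    exact hP r hrOK (hle.trans hler)
  · intro ξ
    obtain ⟨ι, D, hι, hD, htruth⟩ := hT ξ
    refine ⟨Option ι, fun o => Option.rec
      {r | CondOK z π ξ r ∧ (P ξ r ∨ ∀ q, CondOK z π ξ q → CLe r q → ¬ P ξ q)}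
      (fun i => D i) o, ?_, ?_, ?_⟩
    · rw [Cardinal.mk_option]
      calc #ι + 1 ≤ #K + #K := add_le_add hι (le_trans (le_of_lt Cardinal.one_lt_aleph0) hk)
        _ = #K := Cardinal.add_eq_self hk
    · rintro (_ | i)
      · intro p hpOK
        by_cases hex : ∃ q, CondOK z π ξ q ∧ CLe p q ∧ P ξ q
        · obtain ⟨q, hqOK, hle, hPq⟩ := hex
          exact ⟨q, ⟨hqOK, Or.inl hPq⟩, hqOK, hle⟩
        · push_neg at hex
          exact ⟨p, ⟨hpOK, Or.inr (fun q hq hle hP => hex q hq hle hP)⟩, hpOK, CLe.refl p⟩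
      · exact hD i
    · intro σ ζ htc hmeets
      have h0 := htruth σ ζ htc (fun i => hmeets (some i))
      constructor
      · intro hζ
        obtain ⟨r, ⟨hrOK', hr⟩, hrOK, hrb⟩ := hmeets none
        rcases hr with hPr | hP'
        · exact absurd (h0.2 ⟨r, hrOK, hrb, hPr⟩) hζ
        · exact ⟨r, hrOK, hrb, hP'⟩
      · rintro ⟨p, hpOK, hpb, hP'⟩ hζB
        obtain ⟨r, hrOK, hrb, hPr⟩ := h0.1 hζB
        obtain ⟨hjOK, hjb, hpj, hrj⟩ := joinOK hk htc hpOK hrOK hpb hrb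
        exact hP' _ hjOK hpj (hM ξ r _ hrOK hjOK hrj hPr)
  · intro ξ ζ a I hS b hb hba s hs p q hpOK hqOK hm
    have hαb : α < b := lt_of_lt_of_le (Order.lt_succ α) hb
    have hαa : α ≤ a := le_trans (le_of_lt hαb) hba
    constructor
    · intro hP' q' hq'OK hleq hPq'
      obtain ⟨s', hs', hss', p', hp'OK, hpp', hm'⟩ :=
        liftLeft hS hαb hba hs hm hq'OK hleq
      exact hP' p' hp'OK hpp'
        ((hTr ξ ζ a I hS α le_rfl hαa s' hs' p' q' hp'OK hq'OK hm').2 hPq')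
    · intro hP' p' hp'OK hlep hPp'
      obtain ⟨s', hs', hss', q', hq'OK, hqq', hm'⟩ :=
        liftRight hS hαb hba hs hm hp'OK hlep
      exact hP' q' hq'OK hqq'
        ((hTr ξ ζ a I hS α le_rfl hαa s' hs' p' q' hp'OK hq'OK hm').1 hPp')

lemma pkg_iUnion (hunc : ℵ₀ < #K) (ι₀ : Type u) (f : ι₀ → Set (K → K)) (hι₀ : #ι₀ ≤ #K)
    (hpkg : ∀ i, Pkg z π (f i)) : Pkg z π (⋃ i, f i) := by
  classical
  have hk : ℵ₀ ≤ #K := le_of_lt hunc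
  choose α hα P hM hT hTr using hpkg
  have hcof : #ι₀ < ((Order.succ (#K : Cardinal.{u})).ord).cof := by
    rw [(Cardinal.isRegular_succ hk).cof_eq]
    exact lt_of_le_of_lt hι₀ (Order.lt_succ _)
  refine ⟨⨆ i, α i,
    Ordinal.iSup_lt_ord hcof (fun i => hα i),
    fun ξ p => ∃ i, P i ξ p, ?_, ?_, ?_⟩
  · rintro ξ p q hpOK hqOK hle ⟨i, hP⟩
    exact ⟨i, hM i ξ p q hpOK hqOK hle hP⟩
  · intro ξ
    choose ι D hι hD htruth using fun i => hT i ξ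
    refine ⟨Σ i, ι i, fun ij => D ij.1 ij.2, ?_, fun ij => hD ij.1 ij.2, ?_⟩
    · rw [Cardinal.mk_sigma]
      calc Cardinal.sum (fun i => #(ι i)) ≤ Cardinal.sum (fun _ : ι₀ => #K) :=
            Cardinal.sum_le_sum _ _ (fun i => hι i)
        _ = #ι₀ * #K := by rw [Cardinal.sum_const']
        _ ≤ #K * #K := mul_le_mul' hι₀ le_rfl
        _ = #K := Cardinal.mul_eq_self hk
    · intro σ ζ htc hmeets
      constructor
      · intro hζ
        obtain ⟨i, hi⟩ := Set.mem_iUnion.1 hζ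
        obtain ⟨p, hpOK, hpb, hP⟩ :=
          (htruth i σ ζ htc (fun j => hmeets ⟨i, j⟩)).1 hi
        exact ⟨p, hpOK, hpb, i, hP⟩
      · rintro ⟨p, hpOK, hpb, i, hP⟩
        exact Set.mem_iUnion.2
          ⟨i, (htruth i σ ζ htc (fun j => hmeets ⟨i, j⟩)).2 ⟨p, hpOK, hpb, hP⟩⟩
  · intro ξ ζ a I hS b hb hba s hs p q hpOK hqOK hm
    refine exists_congr (fun i => ?_)
    exact hTr i ξ ζ a I hS b (le_trans (Ordinal.le_iSup _ i) hb) hba s hs p q hpOK hqOK hm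

lemma pkg_iInter (hunc : ℵ₀ < #K) (ι₀ : Type u) (f : ι₀ → Set (K → K)) (hι₀ : #ι₀ ≤ #K)
    (hpkg : ∀ i, Pkg z π (f i)) : Pkg z π (⋂ i, f i) := by
  classical
  have hk : ℵ₀ ≤ #K := le_of_lt hunc
  choose α hα P hM hT hTr using hpkg
  have hcof : #ι₀ < ((Order.succ (#K : Cardinal.{u})).ord).cof := by
    rw [(Cardinal.isRegular_succ hk).cof_eq]
    exact lt_of_le_of_lt hι₀ (Order.lt_succ _)
  set c₁ : Ordinal.{u} := ⨆ i, Order.succ (α i) with hc₁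
  have hc₁lt : c₁ < (Order.succ (#K : Cardinal.{u})).ord :=
    Ordinal.iSup_lt_ord hcof (fun i => (ord_succ_isLimit hunc).succ_lt (hα i))
  have hαc₁ : ∀ i, α i < c₁ := fun i =>
    lt_of_lt_of_le (Order.lt_succ _) (Ordinal.le_iSup _ i)
  refine ⟨Order.succ c₁, (ord_succ_isLimit hunc).succ_lt hc₁lt,
    fun ξ p => ∀ i, ∀ p', CondOK z π ξ p' → CLe p p' →
      ∃ p'', CondOK z π ξ p'' ∧ CLe p' p'' ∧ P i ξ p'', ?_, ?_, ?_⟩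
  · intro ξ p q hpOK hqOK hle hP i p' hp'OK hlep'
    exact hP i p' hp'OK (hle.trans hlep')
  · intro ξ
    choose ι D hι hD htruth using fun i => hT i ξ
    set PP : GCond K → Prop := fun p => ∀ i, ∀ p', CondOK z π ξ p' → CLe p p' →
      ∃ p'', CondOK z π ξ p'' ∧ CLe p' p'' ∧ P i ξ p'' with hPP
    refine ⟨(Σ i, ι i) ⊕ Option ι₀, fun o => Sum.rec (fun ij => D ij.1 ij.2)
      (fun o => Option.rec
        {r | CondOK z π ξ r ∧ (PP r ∨ ∃ i, ∀ q, CondOK z π ξ q → CLe r q → ¬ P i ξ q)}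
        (fun i => {r | CondOK z π ξ r ∧
          (P i ξ r ∨ ∀ q, CondOK z π ξ q → CLe r q → ¬ P i ξ q)}) o) o, ?_, ?_, ?_⟩
    · rw [Cardinal.mk_sum, Cardinal.lift_id, Cardinal.lift_id, Cardinal.mk_option,
        Cardinal.mk_sigma]
      have hsig : Cardinal.sum (fun i => #(ι i)) ≤ #K := by
        calc Cardinal.sum (fun i => #(ι i)) ≤ Cardinal.sum (fun _ : ι₀ => #K) :=
              Cardinal.sum_le_sum _ _ (fun i => hι i)
          _ = #ι₀ * #K := by rw [Cardinal.sum_const']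
          _ ≤ #K * #K := mul_le_mul' hι₀ le_rfl
          _ = #K := Cardinal.mul_eq_self hk
      have hopt : #ι₀ + 1 ≤ #K := by
        calc #ι₀ + 1 ≤ #K + #K := add_le_add hι₀
              (le_trans (le_of_lt Cardinal.one_lt_aleph0) hk)
          _ = #K := Cardinal.add_eq_self hk
      calc Cardinal.sum (fun i => #(ι i)) + (#ι₀ + 1) ≤ #K + #K := add_le_add hsig hopt
        _ = #K := Cardinal.add_eq_self hk
    · rintro (ij | (_ | i))
      · exact hD ij.1 ij.2
      · intro p hpOK
        by_cases hP' : PP p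
        · exact ⟨p, ⟨hpOK, Or.inl hP'⟩, hpOK, CLe.refl p⟩
        · simp only [hPP] at hP'
          push_neg at hP'
          obtain ⟨i, p', hp'OK, hlep', hneg⟩ := hP'
          refine ⟨p', ⟨hp'OK, Or.inr ⟨i, fun q hq hle hPq => ?_⟩⟩, hp'OK, hlep'⟩
          exact hneg q hq hle hPq
      · intro p hpOK
        by_cases hex : ∃ q, CondOK z π ξ q ∧ CLe p q ∧ P i ξ q
        · obtain ⟨q, hqOK, hle, hPq⟩ := hex
          exact ⟨q, ⟨hqOK, Or.inl hPq⟩, hqOK, hle⟩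
        · push_neg at hex
          exact ⟨p, ⟨hpOK, Or.inr (fun q hq hle hP => hex q hq hle hP)⟩, hpOK, CLe.refl p⟩
    · intro σ ζ htc hmeets
      constructor
      · intro hζ
        obtain ⟨r, ⟨hrOK', hr⟩, hrOK, hrb⟩ := hmeets (Sum.inr none)
        rcases hr with hPr | ⟨i, hneg⟩
        · exact ⟨r, hrOK, hrb, hPr⟩
        · exfalso
          have hζi : ζ ∈ f i := Set.mem_iInter.1 hζ i
          obtain ⟨r', hr'OK, hr'b, hPi⟩ :=
            (htruth i σ ζ htc (fun j => hmeets (Sum.inl ⟨i, j⟩))).1 hζi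
          obtain ⟨hjOK, hjb, hrj, hr'j⟩ := joinOK hk htc hrOK hr'OK hrb hr'b
          exact hneg _ hjOK hrj (hM i ξ r' _ hr'OK hjOK hr'j hPi)
      · rintro ⟨p, hpOK, hpb, hP'⟩
        refine Set.mem_iInter.2 (fun i => ?_)
        obtain ⟨r, ⟨hrOK', hr⟩, hrOK, hrb⟩ := hmeets (Sum.inr (some i))
        rcases hr with hPr | hneg
        · exact (htruth i σ ζ htc (fun j => hmeets (Sum.inl ⟨i, j⟩))).2 ⟨r, hrOK, hrb, hPr⟩
        · exfalso
          obtain ⟨hjOK, hjb, hpj, hrj⟩ := joinOK hk htc hpOK hrOK hpb hrb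
          obtain ⟨p'', hp''OK, hle'', hPi⟩ := hP' i _ hjOK hpj
          exact hneg p'' hp''OK (hrj.trans hle'') hPi
  · intro ξ ζ a I hS b hb hba s hs p q hpOK hqOK hm
    have hc₁b : c₁ < b := lt_of_lt_of_le (Order.lt_succ c₁) hb
    have hc₁a : c₁ ≤ a := le_trans (le_of_lt hc₁b) hba
    constructor
    · intro hP' i q' hq'OK hleq
      obtain ⟨s', hs', hss', p', hp'OK, hpp', hm'⟩ :=
        liftLeft hS hc₁b hba hs hm hq'OK hleq
      obtain ⟨p'', hp''OK, hle'', hPi⟩ := hP' i p' hp'OK hpp'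
      obtain ⟨s'', hs'', hss'', q'', hq''OK, hq'q'', hm''⟩ :=
        liftRight hS (hαc₁ i) hc₁a hs' hm' hp''OK hle''
      refine ⟨q'', hq''OK, hq'q'', ?_⟩
      exact (hTr i ξ ζ a I hS (α i) le_rfl (le_trans (le_of_lt (hαc₁ i)) hc₁a)
        s'' hs'' p'' q'' hp''OK hq''OK hm'').1 hPi
    · intro hP' i p' hp'OK hlep
      obtain ⟨s', hs', hss', q', hq'OK, hqq', hm'⟩ :=
        liftRight hS hc₁b hba hs hm hp'OK hlep
      obtain ⟨q'', hq''OK, hle'', hPi⟩ := hP' i q' hq'OK hqq'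
      obtain ⟨s'', hs'', hss'', p'', hp''OK, hp'p'', hm''⟩ :=
        liftLeft hS (hαc₁ i) hc₁a hs' hm' hq''OK hle''
      refine ⟨p'', hp''OK, hp'p'', ?_⟩
      exact (hTr i ξ ζ a I hS (α i) le_rfl (le_trans (le_of_lt (hαc₁ i)) hc₁a)
        s'' hs'' p'' q'' hp''OK hq''OK hm'').2 hPi

end PkgCases

lemma condOK_empty {z : K} {π : (Σ n : ℕ, ℕ × (Fin n → K)) ≃ K} (hunc : ℵ₀ < #K)
    (θ : K → K) : CondOK z π θ ((∅, ∅) : GCond K) := by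
  have hpos : (0 : Cardinal.{u}) < #K := Cardinal.aleph0_pos.trans hunc
  have hsz : #(∅ : Set (K × K)) < #K := by
    rw [Cardinal.mk_emptyCollection]
    exact hpos
  exact ⟨fun a b b' h => absurd h (Set.notMem_empty _),
    fun a a' b h => absurd h (Set.notMem_empty _), hsz,
    fun a b b' h => absurd h (Set.notMem_empty _), hsz,
    fun x y h => absurd h (Set.notMem_empty _)⟩

lemma pkg_of_kBorel (hreg : (#K).IsRegular) (hunc : ℵ₀ < #K)
    {z : K} {π : (Σ n : ℕ, ℕ × (Fin n → K)) ≃ K} {B : Set (K → K)}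
    (h : KBorel B) : Pkg z π B := by
  induction h with
  | basic S hS => exact pkg_basic hreg hunc hS
  | compl S _ ih => exact pkg_compl hunc ih
  | iUnion ι f hι _ ih => exact pkg_iUnion hunc ι f hι ih
  | iInter ι f hι _ ih => exact pkg_iInter hunc ι f hι ih

end GDST

namespace GDST

open FirstOrder

/-- Let κ > ω be regular, T a complete first-order theory and η a code of
a model of T of size κ such that for every α < κ⁺ there is a code ξ of a model of T
non-isomorphic to M_η but L_{κ⁺κ}-equivalent to M_η up to quantifier rank α. Then the orbit
of M_η in κ^κ is not κ-Borel. -/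
theorem statement16 (K : Type u) [LinearOrder K]
    (hreg : (#K).IsRegular) (hunc : ℵ₀ < #K)
    (z : K) (hz : ∀ x : K, z ≤ x) (π : (Σ n : ℕ, ℕ × (Fin n → K)) ≃ K)
    (T : Lrel.Theory) (hT : T.IsComplete)
    (η : K → K) (hη : ModelsT z π T η)
    (hyp : ∀ a : Ordinal.{u}, a < (Order.succ (#K)).ord →
      ∃ ξ : K → K, ModelsT z π T ξ ∧ ¬ IsoM z π ξ η ∧ EquivRk z π a ξ η) :
    ¬ KBorel {ξ : K → K | IsoM z π ξ η} := by
  intro hBorel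
  classical
  have hk : ℵ₀ ≤ #K := le_of_lt hunc
  obtain ⟨α, hα, P, hM, hT, hTr⟩ := pkg_of_kBorel hreg hunc (z := z) (π := π) hBorel
  have hw : ∃ w : K, z < w := by
    by_contra hcon
    push_neg at hcon
    have hall : ∀ w : K, w = z := fun w => le_antisymm (hcon w) (hz w)
    have hle1 : #K ≤ 1 :=
      Cardinal.le_one_iff_subsingleton.2 ⟨fun a b => by rw [hall a, hall b]⟩
    exact absurd (lt_of_lt_of_le hunc hle1) (lt_asymm Cardinal.one_lt_aleph0)
  -- Step 1: a condition forcing membership in the orbit, over η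
  obtain ⟨ι, D, hι, hD, htruth⟩ := hT η
  obtain ⟨σ, ζg, htc, hb0, hmeets⟩ :=
    genericExists hreg hunc hw (condOK_empty hunc η) ι D hι hD
  have hiso : ζg ∈ {ξ : K → K | IsoM z π ξ η} := totalCoh_isoM htc
  obtain ⟨q₀, hq₀OK, hq₀b, hPq₀⟩ := (htruth σ ζg htc hmeets).1 hiso
  -- Step 2: transfer the condition to the ≡-equivalent non-isomorphic model ξ
  obtain ⟨ξ, hmod, hniso, heq⟩ := hyp (Order.succ α) ((ord_succ_isLimit hunc).succ_lt hα)
  obtain ⟨I, hI1, hIe, hI3⟩ := heq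
  have hS : Sys z π ξ η (Order.succ α) I := ⟨hI1, hI3⟩
  have hm0 : MatchC (∅ : Set (K × K)) (∅, ∅) (∅, ∅) :=
    ⟨rfl, fun d y h => absurd h (Set.notMem_empty _),
      fun d' y h => absurd h (Set.notMem_empty _)⟩
  obtain ⟨s', hs', -, p₀, hp₀OK, -, hm'⟩ := liftLeft hS (Order.lt_succ α) le_rfl hIe hm0
    hq₀OK ⟨Set.empty_subset _, Set.empty_subset _⟩
  have hPp₀ : P ξ p₀ := (hTr ξ η (Order.succ α) I hS α le_rfl
    (le_of_lt (Order.lt_succ α)) s' hs' p₀ q₀ hp₀OK hq₀OK hm').2 hPq₀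
  -- Step 3: a generic model over ξ below p₀ lands in the orbit
  obtain ⟨ι₂, D₂, hι₂, hD₂, htruth₂⟩ := hT ξ
  obtain ⟨σ₂, ζ₂, htc₂, hb₂, hmeets₂⟩ := genericExists hreg hunc hw hp₀OK ι₂ D₂ hι₂ hD₂
  have hmem : ζ₂ ∈ {ξ : K → K | IsoM z π ξ η} :=
    (htruth₂ σ₂ ζ₂ htc₂ hmeets₂).2 ⟨p₀, hp₀OK, hb₂, hPp₀⟩
  have hiso₂ : IsoM z π ζ₂ ξ := totalCoh_isoM htc₂
  exact hniso (isoM_trans (isoM_symm hiso₂) hmem)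


end GDST
end

section
/- Let κ be a regular uncountable cardinal. There is a (κ,κ⁺)-Borel subset of κ^κ × κ^κ that is universal for the (κ,κ)-Borel subsets of κ^κ, assuming for each α < κ⁺ a κ-Borel set R_α ⊆ κ^κ × κ^κ universal for κ-Σ_α is given. Consequently (by a diagonal argument) there is a (κ,κ⁺)-Borel set that is not (κ,κ)-Borel. -/
open Cardinal Set

universe u v w

namespace GDST

variable (K : Type u)

/-- Even ordinals: limit (or zero) plus an even finite number. -/
def OrdEven (a : Ordinal.{u}) : Prop :=
  ∃ (b : Ordinal.{u}) (n : ℕ), (b = 0 ∨ Order.IsSuccLimit b) ∧ a = b + 2 * n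

/-- The basic sets of level zero of the hierarchy: N_{(i,j)}. -/
def SigBasic : Set (Set (K → K)) := {S | ∃ i j : K, S = {ζ : K → K | ζ i = j}}

open Classical in
/-- The hierarchy κ-Σ_α: level 0 is the basic sets N_{(i,j)}; at a successor of an even
ordinal take κ-unions, at a successor of an odd ordinal take κ-intersections; at limits
take unions of the previous levels. -/
noncomputable def Sig : Ordinal.{u} → Set (Set (K → K)) := fun a =>
  if a = 0 then SigBasic K
  else if h : ∃ b : Ordinal.{u}, a = b + 1 then
    have hb : h.choose < a := by
      conv_rhs => rw [h.choose_spec]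
      simp
    if OrdEven h.choose then
      {S | ∃ f : K → Set (K → K), (∀ i, f i ∈ Sig h.choose) ∧ S = ⋃ i, f i}
    else
      {S | ∃ f : K → Set (K → K), (∀ i, f i ∈ Sig h.choose) ∧ S = ⋂ i, f i}
  else {S | ∃ b : Ordinal.{u}, ∃ _ : b < a, S ∈ Sig b}
termination_by a => a

theorem Sig_zero : Sig K 0 = SigBasic K := by rw [Sig]; simp

open Classical in
theorem Sig_succ (b : Ordinal.{u}) :
    Sig K (b + 1) = if OrdEven b then
      {S | ∃ f : K → Set (K → K), (∀ i, f i ∈ Sig K b) ∧ S = ⋃ i, f i}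
    else
      {S | ∃ f : K → Set (K → K), (∀ i, f i ∈ Sig K b) ∧ S = ⋂ i, f i} := by
  have h : ∃ c : Ordinal.{u}, b + 1 = c + 1 := ⟨b, rfl⟩
  have hc : h.choose = b := by
    have h2 := h.choose_spec
    exact Order.succ_injective (α := Ordinal.{u}) (by
      rw [← Ordinal.add_one_eq_succ, ← Ordinal.add_one_eq_succ]; exact h2.symm)
  rw [Sig]
  rw [if_neg (by rw [Ordinal.add_one_eq_succ]; exact Ordinal.succ_ne_zero b), dif_pos h]
  show (if OrdEven h.choose then
      {S | ∃ f : K → Set (K → K), (∀ i, f i ∈ Sig K h.choose) ∧ S = ⋃ i, f i}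
    else
      {S | ∃ f : K → Set (K → K), (∀ i, f i ∈ Sig K h.choose) ∧ S = ⋂ i, f i}) = _
  rw [hc]

theorem Sig_limit {a : Ordinal.{u}} (h0 : a ≠ 0) (hs : ¬ ∃ b : Ordinal.{u}, a = b + 1) :
    Sig K a = {S | ∃ b : Ordinal.{u}, ∃ _ : b < a, S ∈ Sig K b} := by
  rw [Sig, if_neg h0, dif_neg hs]

theorem Sig_succ_even {b : Ordinal.{u}} (hb : OrdEven b) :
    Sig K (b + 1) = {S | ∃ f : K → Set (K → K), (∀ i, f i ∈ Sig K b) ∧ S = ⋃ i, f i} := by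
  rw [Sig_succ, if_pos hb]

theorem Sig_succ_odd {b : Ordinal.{u}} (hb : ¬ OrdEven b) :
    Sig K (b + 1) = {S | ∃ f : K → Set (K → K), (∀ i, f i ∈ Sig K b) ∧ S = ⋂ i, f i} := by
  rw [Sig_succ, if_neg hb]

theorem ordEven_zero : OrdEven (0 : Ordinal.{u}) := ⟨0, 0, Or.inl rfl, by simp⟩

theorem ordEven_two : OrdEven (2 : Ordinal.{u}) := ⟨0, 1, Or.inl rfl, by simp⟩

theorem ordEven_add_two {a : Ordinal.{u}} (h : OrdEven a) : OrdEven (a + 1 + 1) := by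
  obtain ⟨b, n, hb, rfl⟩ := h
  refine ⟨b, n + 1, hb, ?_⟩
  push_cast
  rw [mul_add, mul_one, add_assoc, add_assoc, one_add_one_eq_two]

theorem ordEven_limit {a : Ordinal.{u}} (h : Order.IsSuccLimit a) : OrdEven a := ⟨a, 0, Or.inr h, by simp⟩

theorem ordEven_two_dvd {a : Ordinal.{u}} (h : OrdEven a) : (2 : Ordinal.{u}) ∣ a := by
  obtain ⟨b, n, hb, rfl⟩ := h
  have hdb : (2 : Ordinal.{u}) ∣ b := by
    rcases hb with rfl | hb
    · exact dvd_zero 2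
    · have hw : Ordinal.omega0 ∣ b := (Ordinal.isSuccLimit_iff_omega0_dvd.mp hb).2
      exact ⟨b, (Ordinal.mul_omega0_dvd (by norm_num) (Ordinal.nat_lt_omega0 2) hw).symm⟩
  exact dvd_add hdb (Dvd.intro _ rfl)

theorem not_ordEven_succ {a : Ordinal.{u}} (h : OrdEven a) : ¬ OrdEven (a + 1) := by
  intro h1
  obtain ⟨c, hc⟩ := ordEven_two_dvd h
  obtain ⟨d, hd⟩ := ordEven_two_dvd h1
  rw [hc] at hd
  rcases le_or_gt d c with hle | hlt
  · have : 2 * d < 2 * c + 1 :=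
      lt_of_le_of_lt (mul_le_mul_right hle 2) (lt_add_of_pos_right _ one_pos)
    exact absurd hd.symm (ne_of_lt this)
  · have h2 : c + 1 ≤ d := Order.add_one_le_of_lt hlt
    have : 2 * c + 2 ≤ 2 * d := by
      calc 2 * c + 2 = 2 * (c + 1) := by rw [mul_add, mul_one]
      _ ≤ 2 * d := mul_le_mul_right h2 2
    rw [← hd] at this
    have h3 : (2:Ordinal.{u}) ≤ 1 := (add_le_add_iff_left (2*c)).mp this
    norm_num at h3

theorem ordEven_or_succ (a : Ordinal.{u}) : OrdEven a ∨ OrdEven (a + 1) := by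
  induction a using Ordinal.limitRecOn with
  | zero => exact Or.inl ordEven_zero
  | add_one b ih =>
    rcases ih with h | h
    · exact Or.inr (ordEven_add_two h)
    · exact Or.inl h
  | limit b hb _ => exact Or.inl (ordEven_limit hb)

theorem Sig_mono (hne : Nonempty K) : ∀ {a b : Ordinal.{u}}, b ≤ a → Sig K b ⊆ Sig K a := by
  intro a
  induction a using Ordinal.induction with
  | h a ih =>
    intro b hb S hS
    rcases eq_or_lt_of_le hb with rfl | hlt
    · exact hS
    rcases Ordinal.zero_or_succ_or_isSuccLimit a with rfl | ⟨c, rfl⟩ | hlim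
    · exact absurd hlt (by simp)
    · rw [← Ordinal.add_one_eq_succ]
      have hbc : b ≤ c := Order.le_of_lt_succ hlt
      have hSc : S ∈ Sig K c := ih c (Order.lt_succ c) hbc hS
      by_cases hc : OrdEven c
      · rw [Sig_succ_even (K := K) hc]; exact ⟨fun _ => S, fun _ => hSc, (Set.iUnion_const S).symm⟩
      · rw [Sig_succ_odd (K := K) hc]; exact ⟨fun _ => S, fun _ => hSc, (Set.iInter_const S).symm⟩
    · rw [Sig_limit (K := K) (by simpa using hlim.ne_bot) (by
        rintro ⟨c, rfl⟩
        exact absurd (hlim.succ_lt (lt_add_one c)) (by rw [Order.succ_eq_add_one]; exact lt_irrefl _))]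
      exact ⟨b, hlt, hS⟩

theorem sig_zero_mem (i j : K) : {ζ : K → K | ζ i = j} ∈ Sig K 0 := by
  rw [Sig_zero]; exact ⟨i, j, rfl⟩

/-- κ-indexed unions of level-`a` sets, `a` even, land in level `a+1`. -/
theorem sig_iUnion {ι : Type u} (hne : Nonempty ι) (hι : #ι ≤ #K) {f : ι → Set (K → K)}
    {a : Ordinal.{u}} (hf : ∀ i, f i ∈ Sig K a) (ha : OrdEven a) :
    (⋃ i, f i) ∈ Sig K (a + 1) := by
  obtain ⟨e⟩ := (Cardinal.le_def ι K).mp hι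
  have hs : Function.Surjective (Function.invFun e) := Function.invFun_surjective e.injective
  rw [Sig_succ_even (K := K) ha]
  exact ⟨fun k => f (Function.invFun e k), fun k => hf _, (hs.iUnion_comp f).symm⟩

theorem sig_iInter {ι : Type u} (hne : Nonempty ι) (hι : #ι ≤ #K) {f : ι → Set (K → K)}
    {a : Ordinal.{u}} (hf : ∀ i, f i ∈ Sig K a) (ha : ¬ OrdEven a) :
    (⋂ i, f i) ∈ Sig K (a + 1) := by
  obtain ⟨e⟩ := (Cardinal.le_def ι K).mp hι
  have hs : Function.Surjective (Function.invFun e) := Function.invFun_surjective e.injective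
  rw [Sig_succ_odd (K := K) ha]
  exact ⟨fun k => f (Function.invFun e k), fun k => hf _, (hs.iInter_comp f).symm⟩

theorem not_ordEven_one : ¬ OrdEven (1 : Ordinal.{u}) := by
  simpa using not_ordEven_succ ordEven_zero

theorem sig_univ (hne : Nonempty K) : (Set.univ : Set (K → K)) ∈ Sig K 1 := by
  obtain ⟨i₀⟩ := hne
  rw [show (1 : Ordinal.{u}) = 0 + 1 by simp, Sig_succ_even (K := K) ordEven_zero]
  refine ⟨fun j => {ζ : K → K | ζ i₀ = j}, fun j => sig_zero_mem K i₀ j, ?_⟩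
  ext ζ; simp

theorem sig_empty (hK : ℵ₀ ≤ #K) : (∅ : Set (K → K)) ∈ Sig K 2 := by
  haveI : Infinite K := Cardinal.infinite_iff.mpr hK
  obtain ⟨i₀⟩ : Nonempty K := inferInstance
  rw [show (2 : Ordinal.{u}) = 1 + 1 by norm_num]
  have h : (∅ : Set (K → K)) = ⋂ j : K, {ζ : K → K | ζ i₀ = j} := by
    ext ζ
    simp only [Set.mem_empty_iff_false, Set.mem_iInter, Set.mem_setOf_eq, false_iff]
    intro h
    obtain ⟨j, hj⟩ := exists_ne (ζ i₀)
    exact hj (h j).symm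
  rw [h]
  exact sig_iInter K ⟨i₀⟩ le_rfl
    (fun j => Sig_mono K ⟨i₀⟩ zero_le_one (sig_zero_mem K i₀ j)) not_ordEven_one

theorem sig_ne_cond (hK : ℵ₀ ≤ #K) (i c : K) : {ζ : K → K | ζ i ≠ c} ∈ Sig K 1 := by
  haveI : Infinite K := Cardinal.infinite_iff.mpr hK
  obtain ⟨c', hc'⟩ := exists_ne c
  rw [show (1 : Ordinal.{u}) = 0 + 1 by simp, Sig_succ_even (K := K) ordEven_zero]
  classical
  refine ⟨fun k => {ζ : K → K | ζ i = if k = c then c' else k},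
    fun k => sig_zero_mem K i _, ?_⟩
  ext ζ
  simp only [Set.mem_setOf_eq, Set.mem_iUnion]
  constructor
  · intro h
    exact ⟨ζ i, by rw [if_neg h]⟩
  · rintro ⟨k, hk⟩
    by_cases hkc : k = c
    · rw [if_pos hkc] at hk; rw [hk]; exact hc'
    · rw [if_neg hkc] at hk; rw [hk]; exact hkc

theorem sig_nbhd (hK : ℵ₀ ≤ #K) {Y : Set K} (hY : #Y < #K) (η : K → K) :
    nbhd Y η ∈ Sig K 2 := by
  haveI : Infinite K := Cardinal.infinite_iff.mpr hK
  have hne : Nonempty K := inferInstance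
  rcases isEmpty_or_nonempty Y with hY0 | hY1
  · have : nbhd Y η = Set.univ := by
      ext ζ; simp only [nbhd, Set.mem_setOf_eq, Set.mem_univ, iff_true]
      intro i hi; exact absurd (⟨i, hi⟩ : Y).2 (by exact hY0.elim ⟨i, hi⟩)
    rw [this]
    exact Sig_mono K hne one_le_two (sig_univ K hne)
  · obtain ⟨e⟩ := (Cardinal.le_def (↥Y) K).mp hY.le
    have hs : Function.Surjective (Function.invFun e) := Function.invFun_surjective e.injective
    have h : nbhd Y η = ⋂ k : K, {ζ : K → K |
        ζ ((Function.invFun e k : Y) : K) = η ((Function.invFun e k : Y) : K)} := by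
      ext ζ
      simp only [nbhd, Set.mem_setOf_eq, Set.mem_iInter]
      constructor
      · intro h k; exact h _ (Function.invFun e k).2
      · intro h i hi
        obtain ⟨k, hk⟩ := hs ⟨i, hi⟩
        have := h k; rw [hk] at this; exact this
    rw [h, show (2 : Ordinal.{u}) = 1 + 1 by norm_num]
    exact sig_iInter K hne le_rfl
      (fun k => Sig_mono K hne zero_le_one (sig_zero_mem K _ _)) not_ordEven_one

theorem two_le_three : (2 : Ordinal.{u}) ≤ 3 := by
  rw [show (3 : Ordinal.{u}) = 2 + 1 by norm_num]
  exact (le_self_add)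

theorem sig_nbhd_compl (hK : ℵ₀ ≤ #K) {Y : Set K} (hY : #Y < #K) (η : K → K) :
    (nbhd Y η)ᶜ ∈ Sig K 3 := by
  haveI : Infinite K := Cardinal.infinite_iff.mpr hK
  have hne : Nonempty K := inferInstance
  rcases isEmpty_or_nonempty Y with hY0 | hY1
  · have : nbhd Y η = Set.univ := by
      ext ζ; simp only [nbhd, Set.mem_setOf_eq, Set.mem_univ, iff_true]
      intro i hi; exact (hY0.elim ⟨i, hi⟩)
    rw [this, Set.compl_univ]
    exact Sig_mono K hne two_le_three (sig_empty K hK)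
  · obtain ⟨e⟩ := (Cardinal.le_def (↥Y) K).mp hY.le
    have hs : Function.Surjective (Function.invFun e) := Function.invFun_surjective e.injective
    have h : (nbhd Y η)ᶜ = ⋃ k : K, {ζ : K → K |
        ζ ((Function.invFun e k : Y) : K) ≠ η ((Function.invFun e k : Y) : K)} := by
      ext ζ
      simp only [nbhd, Set.mem_compl_iff, Set.mem_setOf_eq, Set.mem_iUnion]
      constructor
      · intro h
        by_contra hc
        push_neg at hc
        refine h fun i hi => ?_
        obtain ⟨k, hk⟩ := hs ⟨i, hi⟩
        have := hc k; rw [hk] at this; exact not_not.mp (fun hn => hn this)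
      · rintro ⟨k, hk⟩ h
        exact hk (h _ (Function.invFun e k).2)
    rw [h, show (3 : Ordinal.{u}) = 2 + 1 by norm_num]
    exact sig_iUnion K hne le_rfl
      (fun k => Sig_mono K hne one_le_two (sig_ne_cond K hK _ _)) ordEven_two

theorem sig_basic3 (hK : ℵ₀ ≤ #K) {S : Set (K → K)} (h : IsBasicOpen S) :
    S ∈ Sig K 3 ∧ Sᶜ ∈ Sig K 3 := by
  haveI : Infinite K := Cardinal.infinite_iff.mpr hK
  have hne : Nonempty K := inferInstance
  rcases h with ⟨Y, η, hY, rfl⟩ | rfl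
  · exact ⟨Sig_mono K hne two_le_three (sig_nbhd K hK hY η), sig_nbhd_compl K hK hY η⟩
  · constructor
    · exact Sig_mono K hne two_le_three (sig_empty K hK)
    · rw [Set.compl_empty]
      exact Sig_mono K hne (le_trans one_le_two two_le_three) (sig_univ K hne)

theorem sig_union_and_inter (hK : ℵ₀ ≤ #K) {ι : Type u} (hne : Nonempty ι) (hι : #ι ≤ #K)
    {f : ι → Set (K → K)} {A : Ordinal.{u}} (hf : ∀ i, f i ∈ Sig K A) :
    (⋃ i, f i) ∈ Sig K (A + 1 + 1 + 1) ∧ (⋂ i, f i) ∈ Sig K (A + 1 + 1 + 1) := by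
  haveI : Infinite K := Cardinal.infinite_iff.mpr hK
  have hne' : Nonempty K := inferInstance
  have l1 : A ≤ A + 1 := le_self_add
  have l2 : A + 1 ≤ A + 1 + 1 := le_self_add
  have l3 : A + 1 + 1 ≤ A + 1 + 1 + 1 := le_self_add
  rcases ordEven_or_succ A with hA | hA
  · have hu : (⋃ i, f i) ∈ Sig K (A + 1) := sig_iUnion K hne hι hf hA
    have hi : (⋂ i, f i) ∈ Sig K (A + 1 + 1) :=
      sig_iInter K hne hι (fun i => Sig_mono K hne' l1 (hf i)) (not_ordEven_succ hA)
    exact ⟨Sig_mono K hne' (l2.trans l3) hu, Sig_mono K hne' l3 hi⟩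
  · have hu : (⋃ i, f i) ∈ Sig K (A + 1 + 1) :=
      sig_iUnion K hne hι (fun i => Sig_mono K hne' l1 (hf i)) hA
    have hi : (⋂ i, f i) ∈ Sig K (A + 1 + 1 + 1) :=
      sig_iInter K hne hι (fun i => Sig_mono K hne' (l1.trans l2) (hf i)) (not_ordEven_succ hA)
    exact ⟨Sig_mono K hne' l3 hu, hi⟩

theorem muBorel_mem_sig (hreg : (#K).IsRegular) (hunc : ℵ₀ < #K) {S : Set (K → K)}
    (hS : MuBorel (#K) S) :
    ∃ a : Ordinal.{u}, a < (Order.succ (#K)).ord ∧ S ∈ Sig K a ∧ Sᶜ ∈ Sig K a := by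
  have hK : ℵ₀ ≤ #K := hunc.le
  haveI : Infinite K := Cardinal.infinite_iff.mpr hK
  have hne' : Nonempty K := inferInstance
  set o := (Order.succ (#K)).ord with ho
  have hKo : ℵ₀ ≤ Order.succ (#K) := hK.trans (Order.le_succ _)
  have holim : Order.IsSuccLimit o := Cardinal.isSuccLimit_ord hKo
  have h3 : (3 : Ordinal.{u}) < o := by
    have : (3 : Ordinal.{u}) < Ordinal.omega0 := by
      have := Ordinal.nat_lt_omega0 3; simpa using this
    refine this.trans_le ?_
    rw [← Cardinal.ord_aleph0]
    exact Cardinal.ord_le_ord.mpr hKo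
  have hcof : o.cof = Order.succ (#K) := (Cardinal.isRegular_succ hK).cof_eq
  induction hS with
  | basic S h =>
    obtain ⟨h1, h2⟩ := sig_basic3 K hK h
    exact ⟨3, h3, h1, h2⟩
  | compl S hS ih =>
    obtain ⟨a, ha, h1, h2⟩ := ih
    exact ⟨a, ha, h2, by rwa [compl_compl]⟩
  | iUnion ι f hι hf ih =>
    rcases isEmpty_or_nonempty ι with hE | hNe
    · have h1 : ⋃ i, f i = ∅ := by simp
      rw [h1]
      obtain ⟨g1, g2⟩ := sig_basic3 K hK (Or.inr rfl : IsBasicOpen (∅ : Set (K → K)))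
      exact ⟨3, h3, g1, g2⟩
    · choose a hao hfa hfca using ih
      set A := ⨆ i, a i with hA
      have hAo : A < o := Ordinal.iSup_lt_ord (by rw [hcof]; exact Order.lt_succ_iff.mpr hι) hao
      have hle : ∀ i, a i ≤ A := fun i => Ordinal.le_iSup a i
      have hfA : ∀ i, f i ∈ Sig K A := fun i => Sig_mono K hne' (hle i) (hfa i)
      have hfcA : ∀ i, (f i)ᶜ ∈ Sig K A := fun i => Sig_mono K hne' (hle i) (hfca i)
      have hu := (sig_union_and_inter K hK hNe hι hfA).1
      have hi := (sig_union_and_inter K hK hNe hι hfcA).2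
      refine ⟨A + 1 + 1 + 1, ?_, hu, by rwa [Set.compl_iUnion]⟩
      have hsucc : ∀ x : Ordinal.{u}, x < o → x + 1 < o := fun x hx => by
        rw [Ordinal.add_one_eq_succ]; exact holim.succ_lt hx
      exact hsucc _ (hsucc _ (hsucc _ hAo))
  | iInter ι f hι hf ih =>
    rcases isEmpty_or_nonempty ι with hE | hNe
    · have h1 : ⋂ i, f i = Set.univ := by simp
      rw [h1]
      refine ⟨3, h3, Sig_mono K hne' (le_trans one_le_two two_le_three) (sig_univ K hne'), ?_⟩
      rw [Set.compl_univ]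
      exact Sig_mono K hne' two_le_three (sig_empty K hK)
    · choose a hao hfa hfca using ih
      set A := ⨆ i, a i with hA
      have hAo : A < o := Ordinal.iSup_lt_ord (by rw [hcof]; exact Order.lt_succ_iff.mpr hι) hao
      have hle : ∀ i, a i ≤ A := fun i => Ordinal.le_iSup a i
      have hfA : ∀ i, f i ∈ Sig K A := fun i => Sig_mono K hne' (hle i) (hfa i)
      have hfcA : ∀ i, (f i)ᶜ ∈ Sig K A := fun i => Sig_mono K hne' (hle i) (hfca i)
      have hu := (sig_union_and_inter K hK hNe hι hfA).2
      have hi := (sig_union_and_inter K hK hNe hι hfcA).1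
      refine ⟨A + 1 + 1 + 1, ?_, hu, by rwa [Set.compl_iInter]⟩
      have hsucc : ∀ x : Ordinal.{u}, x < o → x + 1 < o := fun x hx => by
        rw [Ordinal.add_one_eq_succ]; exact holim.succ_lt hx
      exact hsucc _ (hsucc _ (hsucc _ hAo))

section Borel2

variable {B : Type u}

theorem isBasicOpen_inter {A : Type u} (hK : ℵ₀ ≤ #K) {S T : Set (K → A)}
    (hS : IsBasicOpen S) (hT : IsBasicOpen T) : IsBasicOpen (S ∩ T) := by
  classical
  rcases hS with ⟨Y, η, hY, rfl⟩ | rfl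
  · rcases hT with ⟨Z, θ, hZ, rfl⟩ | rfl
    · by_cases hag : ∀ i ∈ Y ∩ Z, η i = θ i
      · left
        refine ⟨Y ∪ Z, fun i => if i ∈ Y then η i else θ i,
          lt_of_le_of_lt (Cardinal.mk_union_le Y Z) (Cardinal.add_lt_of_lt hK hY hZ), ?_⟩
        ext ζ
        simp only [nbhd, Set.mem_inter_iff, Set.mem_setOf_eq, Set.mem_union]
        constructor
        · rintro ⟨h1, h2⟩ i hi
          by_cases hiY : i ∈ Y
          · rw [if_pos hiY]; exact h1 i hiY
          · rw [if_neg hiY]; exact h2 i (hi.resolve_left hiY)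
        · intro h
          refine ⟨fun i hi => ?_, fun i hi => ?_⟩
          · have := h i (Or.inl hi); rwa [if_pos hi] at this
          · by_cases hiY : i ∈ Y
            · have := h i (Or.inl hiY); rw [if_pos hiY] at this
              rw [this]; exact hag i ⟨hiY, hi⟩
            · have := h i (Or.inr hi); rwa [if_neg hiY] at this
      · right
        push_neg at hag
        obtain ⟨i, hi, hne⟩ := hag
        ext ζ
        simp only [nbhd, Set.mem_inter_iff, Set.mem_setOf_eq, Set.mem_empty_iff_false, iff_false]
        rintro ⟨h1, h2⟩
        exact hne ((h1 i hi.1).symm.trans (h2 i hi.2))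
    · rw [Set.inter_empty]; exact Or.inr rfl
  · rw [Set.empty_inter]; exact Or.inr rfl

theorem isBasicOpen_precomp {A : Type v} (hne : Nonempty K) {g : K → K}
    (hg : Function.Injective g) {S : Set (K → A)} (h : IsBasicOpen S) :
    IsBasicOpen ((fun ζ : K → A => fun i => ζ (g i)) ⁻¹' S) := by
  rcases h with ⟨Y, η, hY, rfl⟩ | rfl
  · left
    refine ⟨g '' Y, fun k => η (Function.invFun g k),
      lt_of_le_of_lt Cardinal.mk_image_le hY, ?_⟩
    ext ζ
    simp only [nbhd, Set.mem_preimage, Set.mem_setOf_eq]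
    constructor
    · rintro h k ⟨i, hi, rfl⟩
      rw [Function.leftInverse_invFun hg i]
      exact h i hi
    · intro h i hi
      have := h (g i) ⟨i, hi, rfl⟩
      rwa [Function.leftInverse_invFun hg i] at this
  · rw [Set.preimage_empty]; exact Or.inr rfl

theorem muBorel_mono {A : Type v} {μ μ' : Cardinal.{u}} (h : μ ≤ μ') {S : Set (K → A)}
    (hS : MuBorel μ S) : MuBorel μ' S := by
  induction hS with
  | basic S h => exact MuBorel.basic S h
  | compl S _ ih => exact MuBorel.compl S ih
  | iUnion ι f hι _ ih => exact MuBorel.iUnion ι f (hι.trans h) ih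
  | iInter ι f hι _ ih => exact MuBorel.iInter ι f (hι.trans h) ih

theorem muBorel2_mono {A : Type v} {B : Type w} {μ μ' : Cardinal.{u}} (h : μ ≤ μ')
    {S : Set ((K → A) × (K → B))} (hS : MuBorel2 μ S) : MuBorel2 μ' S := by
  induction hS with
  | basic S h => exact MuBorel2.basic S h
  | compl S _ ih => exact MuBorel2.compl S ih
  | iUnion ι f hι _ ih => exact MuBorel2.iUnion ι f (hι.trans h) ih
  | iInter ι f hι _ ih => exact MuBorel2.iInter ι f (hι.trans h) ih

theorem muBorel2_inter {A : Type v} {B : Type w} {μ : Cardinal.{u}} (hμ : 2 ≤ μ)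
    {S T : Set ((K → A) × (K → B))} (hS : MuBorel2 μ S) (hT : MuBorel2 μ T) :
    MuBorel2 μ (S ∩ T) := by
  have h : S ∩ T = ⋂ b : ULift.{u} Bool, cond b.down S T := by
    ext x
    simp only [Set.mem_inter_iff, Set.mem_iInter]
    constructor
    · rintro ⟨h1, h2⟩ ⟨b⟩; cases b <;> simpa
    · intro h; exact ⟨by simpa using h ⟨true⟩, by simpa using h ⟨false⟩⟩
  rw [h]
  refine MuBorel2.iInter _ _ (by simpa using hμ) ?_
  rintro ⟨b⟩; cases b
  · simpa
  · simpa

theorem muBorel2_preimage_second {μ : Cardinal.{u}} (hne : Nonempty K) {g : K → K}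
    (hg : Function.Injective g) {S : Set ((K → K) × (K → K))} (hS : MuBorel2 μ S) :
    MuBorel2 μ ((fun q : (K → K) × (K → K) => (q.1, fun i => q.2 (g i))) ⁻¹' S) := by
  induction hS with
  | basic S h =>
    obtain ⟨S₁, S₂, h1, h2, rfl⟩ := h
    have : (fun q : (K → K) × (K → K) => (q.1, fun i => q.2 (g i))) ⁻¹' (S₁ ×ˢ S₂)
        = S₁ ×ˢ ((fun ζ : K → K => fun i => ζ (g i)) ⁻¹' S₂) := by
      ext ⟨η, ξ⟩; simp [Set.mem_prod]
    rw [this]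
    exact MuBorel2.basic _ ⟨S₁, _, h1, isBasicOpen_precomp K hne hg h2, rfl⟩
  | compl S _ ih => rw [Set.preimage_compl]; exact MuBorel2.compl _ ih
  | iUnion ι f hι _ ih => rw [Set.preimage_iUnion]; exact MuBorel2.iUnion ι _ hι ih
  | iInter ι f hι _ ih => rw [Set.preimage_iInter]; exact MuBorel2.iInter ι _ hι ih

theorem muBorel_preimage_diag {μ : Cardinal.{u}} (hK : ℵ₀ ≤ #K)
    {S : Set ((K → K) × (K → K))} (hS : MuBorel2 μ S) :
    MuBorel μ ((fun η : K → K => (η, η)) ⁻¹' S) := by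
  induction hS with
  | basic S h =>
    obtain ⟨S₁, S₂, h1, h2, rfl⟩ := h
    have : (fun η : K → K => (η, η)) ⁻¹' (S₁ ×ˢ S₂) = S₁ ∩ S₂ := by
      ext η; simp [Set.mem_prod]
    rw [this]
    exact MuBorel.basic _ (isBasicOpen_inter K hK h1 h2)
  | compl S _ ih => rw [Set.preimage_compl]; exact MuBorel.compl _ ih
  | iUnion ι f hι _ ih => rw [Set.preimage_iUnion]; exact MuBorel.iUnion ι _ hι ih
  | iInter ι f hι _ ih => rw [Set.preimage_iInter]; exact MuBorel.iInter ι _ hι ih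

end Borel2


/-- Let κ be regular uncountable. Given, for each α < κ⁺, a κ-Borel set
R_α ⊆ κ^κ × κ^κ universal for κ-Σ_α, there is a (κ,κ⁺)-Borel subset of κ^κ × κ^κ universal
for the (κ,κ)-Borel subsets of κ^κ; consequently there is a (κ,κ⁺)-Borel set that is not
(κ,κ)-Borel. -/
theorem statement18 (K : Type u) (hreg : (#K).IsRegular) (hunc : ℵ₀ < #K)
    (R : Ordinal.{u} → Set ((K → K) × (K → K)))
    (hR1 : ∀ a : Ordinal.{u}, a < (Order.succ (#K)).ord → KBorel2 (R a))
    (hR2 : ∀ a : Ordinal.{u}, a < (Order.succ (#K)).ord →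
      ∀ S ∈ Sig K a, ∃ ξ : K → K, S = {η : K → K | (η, ξ) ∈ R a}) :
    (∃ U : Set ((K → K) × (K → K)), MuBorel2 (Order.succ (#K)) U ∧
      ∀ S : Set (K → K), MuBorel (#K) S → ∃ ξ : K → K, S = {η : K → K | (η, ξ) ∈ U}) ∧
    ∃ B : Set (K → K), MuBorel (Order.succ (#K)) B ∧ ¬ MuBorel (#K) B := by
  classical
  have hK : ℵ₀ ≤ #K := hunc.le
  haveI : Infinite K := Cardinal.infinite_iff.mpr hK
  have hne : Nonempty K := inferInstance
  set o := (Order.succ (#K)).ord with ho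
  obtain ⟨p⟩ : Nonempty (K ≃ (K ⊕ K)) := Cardinal.eq.mp (by
    simp [Cardinal.mk_sum, Cardinal.add_eq_self hK])
  set g1 : K → K := fun i => p.symm (Sum.inl i) with hg1def
  set g2 : K → K := fun i => p.symm (Sum.inr i) with hg2def
  have hg2 : Function.Injective g2 := fun a b h => by
    have := p.symm.injective h
    exact Sum.inr.inj this
  have hcard : #o.ToType ≤ #(K → K) := by
    rw [Cardinal.mk_toType, Cardinal.card_ord]
    have h1 : Order.succ (#K) ≤ 2 ^ #K := Order.succ_le_of_lt (Cardinal.cantor _)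
    refine h1.trans ?_
    rw [← Cardinal.power_def K K]
    exact Cardinal.power_le_power_right
      (le_trans (by exact_mod_cast (Cardinal.nat_lt_aleph0 2).le) hK)
  obtain ⟨e⟩ := (Cardinal.le_def _ _).mp hcard
  set en := Ordinal.ToType.mk (o := o) with hen
  set α : o.ToType → Ordinal.{u} := fun i => ((en.symm i : Set.Iio o) : Ordinal.{u}) with hαdef
  have hα : ∀ i, α i < o := fun i => (en.symm i).2
  set F : (K → K) × (K → K) → (K → K) × (K → K) := fun q => (q.1, fun i => q.2 (g2 i))
    with hFdef
  set C : o.ToType → Set ((K → K) × (K → K)) := fun i => {q | ∀ j, q.2 (g1 j) = e i j}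
    with hCdef
  set U : Set ((K → K) × (K → K)) := ⋃ i : o.ToType, (F ⁻¹' R (α i)) ∩ C i with hUdef
  have hCB : ∀ i, MuBorel2 (#K) (C i) := by
    intro i
    have hCeq : C i = ⋂ j : K, ((Set.univ : Set (K → K)) ×ˢ nbhd {g1 j} (fun _ => e i j)) := by
      ext ⟨η, ξ⟩
      simp only [hCdef, Set.mem_setOf_eq, Set.mem_iInter, Set.mem_prod, Set.mem_univ,
        true_and, nbhd, Set.mem_singleton_iff]
      constructor
      · intro h j k hk; rw [hk]; exact h j
      · intro h j; exact h j (g1 j) rfl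
    rw [hCeq]
    refine MuBorel2.iInter _ _ le_rfl fun j => MuBorel2.basic _ ⟨Set.univ, _, ?_, ?_, rfl⟩
    · refine Or.inl ⟨∅, fun _ => Classical.arbitrary K, ?_, ?_⟩
      · simpa using Cardinal.aleph0_pos.trans_le hK
      · ext ζ; simp [nbhd]
    · exact Or.inl ⟨{g1 j}, fun _ => e i j, by
        simpa using Cardinal.one_lt_aleph0.trans_le hK, rfl⟩
  have hUB : MuBorel2 (Order.succ (#K)) U := by
    refine MuBorel2.iUnion _ _ ?_ fun i => ?_
    · rw [Cardinal.mk_toType, Cardinal.card_ord]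
    · refine muBorel2_mono K (Order.le_succ _) (muBorel2_inter K ?_ ?_ (hCB i))
      · exact le_trans (by exact_mod_cast (Cardinal.nat_lt_aleph0 2).le) hK
      · exact muBorel2_preimage_second K hne hg2 (hR1 (α i) (hα i))
  have hmain : ∃ U : Set ((K → K) × (K → K)), MuBorel2 (Order.succ (#K)) U ∧
      ∀ S : Set (K → K), MuBorel (#K) S → ∃ ξ : K → K, S = {η : K → K | (η, ξ) ∈ U} := by
    refine ⟨U, hUB, fun S hSB => ?_⟩
    obtain ⟨a, hao, hSa, -⟩ := muBorel_mem_sig K hreg hunc hSB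
    obtain ⟨ζS, hζS⟩ := hR2 a hao S hSa
    set i₀ : o.ToType := en ⟨a, hao⟩ with hi₀
    have hαi₀ : α i₀ = a := by
      rw [hαdef]; simp [hi₀]
    set ξ : K → K := fun k => Sum.elim (e i₀) ζS (p k) with hξdef
    have hg1v : ∀ j, ξ (g1 j) = e i₀ j := by
      intro j; rw [hξdef, hg1def]; simp
    have hg2v : (fun j => ξ (g2 j)) = ζS := by
      funext j; rw [hξdef, hg2def]; simp
    refine ⟨ξ, ?_⟩
    ext η
    simp only [hUdef, Set.mem_setOf_eq, Set.mem_iUnion, Set.mem_inter_iff, Set.mem_preimage]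
    constructor
    · intro hη
      refine ⟨i₀, ?_, hg1v⟩
      show F (η, ξ) ∈ R (α i₀)
      rw [hFdef, hαi₀]
      simpa [hg2v] using (hζS ▸ hη : η ∈ {η : K → K | (η, ζS) ∈ R a})
    · rintro ⟨i, hmem, hcond⟩
      have hii : i = i₀ := by
        apply e.injective
        funext j
        rw [← hcond j]; exact hg1v j
      rw [hii, hαi₀] at hmem
      have : (η, ζS) ∈ R a := by
        have := hmem
        rw [hFdef] at this
        simpa [hg2v] using this
      rw [hζS]; exact this
  refine ⟨hmain, ?_⟩
  obtain ⟨U', hU'B, hU'univ⟩ := hmain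
  refine ⟨(fun η : K → K => (η, η)) ⁻¹' U'ᶜ,
    muBorel_preimage_diag K hK (MuBorel2.compl _ hU'B), ?_⟩
  intro hBk
  obtain ⟨ξ, hξ⟩ := hU'univ _ hBk
  have h1 : ξ ∈ (fun η : K → K => (η, η)) ⁻¹' U'ᶜ ↔ (ξ, ξ) ∉ U' := Iff.rfl
  have h2 : ξ ∈ (fun η : K → K => (η, η)) ⁻¹' U'ᶜ ↔ (ξ, ξ) ∈ U' := by
    conv_lhs => rw [hξ]
    exact Iff.rfl
  tauto

end GDST
end
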